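/- arXiv:2501.05543 — 13 statements merged into one kernel-verified Lean document; each statement's English description precedes it below -/
import Mathlib

section
/- Let N ≥ 1 be an integer, let a_1, …, a_N be nonzero real numbers and let m be a real number. Then the real polynomial F̂(x) = (1 − x²)·∏_{i=1}^N (x² + a_i²) + 2mx has at most four distinct real roots. -/
open Set Finset

/-! Auxiliary definitions: `Pf` is `P(u) = ∏ (u + aᵢ²)`, `Pd` its derivative,
`psiF` the logarithmic-derivative combination `ψ(u) = 2u(1-u) Σ 1/(u+aᵢ²) - (1+u)`,
`phiF` the function `φ(u) = (1-u)² P(u)² / u`, whose level sets control the roots. -/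

noncomputable def Pf {N : ℕ} (a : Fin N → ℝ) : ℝ → ℝ := fun u => ∏ i, (u + a i ^ 2)
noncomputable def Pd {N : ℕ} (a : Fin N → ℝ) : ℝ → ℝ :=
  fun u => ∑ i, ∏ j ∈ Finset.univ.erase i, (u + a j ^ 2)
noncomputable def psiF {N : ℕ} (a : Fin N → ℝ) : ℝ → ℝ :=
  fun u => 2 * (u - u ^ 2) * (∑ i, (u + a i ^ 2)⁻¹) - (1 + u)
noncomputable def psiF1 {N : ℕ} (a : Fin N → ℝ) : ℝ → ℝ :=
  fun u => (∑ i, ((2 - 4 * u) * (u + a i ^ 2)⁻¹ - 2 * (u - u ^ 2) * ((u + a i ^ 2) ^ 2)⁻¹)) - 1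
noncomputable def psiF2 {N : ℕ} (a : Fin N → ℝ) : ℝ → ℝ :=
  fun u => ∑ i, (-4 * (a i ^ 2) * (1 + a i ^ 2)) * ((u + a i ^ 2) ^ 3)⁻¹
noncomputable def phiF {N : ℕ} (a : Fin N → ℝ) : ℝ → ℝ :=
  fun u => (1 - u) ^ 2 * (Pf a u) ^ 2 / u
noncomputable def phiD {N : ℕ} (a : Fin N → ℝ) : ℝ → ℝ :=
  fun u => (((-2) * (1 - u) * (Pf a u) ^ 2 + (1 - u) ^ 2 * (2 * Pf a u * Pd a u)) * u
      - (1 - u) ^ 2 * (Pf a u) ^ 2 * 1) / u ^ 2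

/-- Extract a strictly monotone `k`-tuple from a set of reals with at least `k` elements. -/
lemma exists_strictMono_of_encard {k : ℕ} {A : Set ℝ} (h : (k : ℕ∞) ≤ A.encard) :
    ∃ f : Fin k → ℝ, StrictMono f ∧ ∀ i, f i ∈ A := by
  obtain ⟨t, htA, ht⟩ := Set.exists_subset_encard_eq h
  have htfin : t.Finite := Set.finite_of_encard_eq_coe ht
  have hcard : htfin.toFinset.card = k := by
    have := htfin.encard_eq_coe_toFinset_card
    rw [ht] at this
    exact_mod_cast this.symm
  set e := htfin.toFinset.orderIsoOfFin hcard with he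
  refine ⟨fun i => (e i : ℝ), ?_, fun i => ?_⟩
  · intro i j hij
    exact_mod_cast (e.strictMono hij)
  · exact htA (htfin.mem_toFinset.mp (e i).2)

section Derivs

variable {N : ℕ}

lemma psiF_eq (a : Fin N → ℝ) (u : ℝ) :
    psiF a u = (∑ i, 2 * (u - u ^ 2) * (u + a i ^ 2)⁻¹) - (1 + u) := by
  simp [psiF, Finset.mul_sum]

lemma hasDerivAt_psiF (a : Fin N → ℝ) {u : ℝ} (hu : ∀ i, u + a i ^ 2 ≠ 0) :
    HasDerivAt (psiF a) (psiF1 a u) u := by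
  have : HasDerivAt (fun x => (∑ i, 2 * (x - x ^ 2) * (x + a i ^ 2)⁻¹) - (1 + x))
      (psiF1 a u) u := by
    apply HasDerivAt.sub
    · apply HasDerivAt.fun_sum
      intro i _
      have h1 : HasDerivAt (fun x : ℝ => 2 * (x - x ^ 2)) (2 - 4 * u) u := by
        have := ((hasDerivAt_id u).fun_sub ((hasDerivAt_pow 2 u))).const_mul (2 : ℝ)
        convert! this using 1; ring
      have h2 : HasDerivAt (fun x : ℝ => (x + a i ^ 2)⁻¹)
          (-(((u + a i ^ 2) ^ 2)⁻¹)) u := by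
        have := ((hasDerivAt_id u).add_const (a i ^ 2)).fun_inv (hu i)
        convert! this using 1
        field_simp
        rfl
      convert! h1.fun_mul h2 using 1
      ring
    · have := (hasDerivAt_const u (1:ℝ)).fun_add (hasDerivAt_id u)
      convert! this using 1
      simp
  exact this.congr_of_eventuallyEq (by filter_upwards with x using (psiF_eq a x))

lemma hasDerivAt_psiF1 (a : Fin N → ℝ) {u : ℝ} (hu : ∀ i, 0 < u + a i ^ 2) :
    HasDerivAt (psiF1 a) (psiF2 a u) u := by
  unfold psiF1 psiF2
  apply HasDerivAt.sub_const
  apply HasDerivAt.fun_sum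
  intro i _
  have hne : u + a i ^ 2 ≠ 0 := (hu i).ne'
  have hv : HasDerivAt (fun x : ℝ => x + a i ^ 2) 1 u := (hasDerivAt_id u).add_const _
  have hinv : HasDerivAt (fun x : ℝ => (x + a i ^ 2)⁻¹)
      (-(((u + a i ^ 2) ^ 2)⁻¹)) u := by
    have := hv.fun_inv hne
    convert! this using 1; field_simp
  have hinv2 : HasDerivAt (fun x : ℝ => ((x + a i ^ 2) ^ 2)⁻¹)
      (-(2 * (u + a i ^ 2) * (((u + a i ^ 2) ^ 2) ^ 2)⁻¹)) u := by
    have hsq : HasDerivAt (fun x : ℝ => (x + a i ^ 2) ^ 2) (2 * (u + a i ^ 2)) u := by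
      have := hv.fun_pow 2
      convert! this using 1; ring
    have := hsq.fun_inv (pow_ne_zero 2 hne)
    convert! this using 1; field_simp
  have hA : HasDerivAt (fun x : ℝ => (2 - 4 * x)) (-4 : ℝ) u := by
    have := ((hasDerivAt_id u).const_mul (4 : ℝ)).const_sub 2
    convert! this using 1; ring
  have hB : HasDerivAt (fun x : ℝ => 2 * (x - x ^ 2)) (2 - 4 * u) u := by
    have := ((hasDerivAt_id u).fun_sub ((hasDerivAt_pow 2 u))).const_mul (2 : ℝ)
    convert! this using 1; ring
  have := (hA.fun_mul hinv).fun_sub (hB.fun_mul hinv2)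
  convert this using 1
  have h3 : (u + a i ^ 2) ^ 3 ≠ 0 := pow_ne_zero _ hne
  field_simp
  ring

lemma vpos (a : Fin N → ℝ) {u : ℝ} (hu : 0 < u) (i : Fin N) : 0 < u + a i ^ 2 := by positivity

lemma psiF2_neg (a : Fin N → ℝ) (hN : 1 ≤ N) (ha : ∀ i, a i ≠ 0) {u : ℝ} (hu : 0 < u) :
    psiF2 a u < 0 := by
  have : Nonempty (Fin N) := Fin.pos_iff_nonempty.mp hN
  apply Finset.sum_neg _ Finset.univ_nonempty
  intro i _
  have hv : 0 < u + a i ^ 2 := vpos a hu i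
  have h1 : 0 < a i ^ 2 := sq_pos_iff.mpr (ha i)
  have h2 : 0 < ((u + a i ^ 2) ^ 3)⁻¹ := by positivity
  nlinarith [mul_pos (mul_pos h1 (by positivity : (0:ℝ) < 1 + a i ^ 2)) h2]

lemma strictConcave_psiF (a : Fin N → ℝ) (hN : 1 ≤ N) (ha : ∀ i, a i ≠ 0) :
    StrictConcaveOn ℝ (Set.Ioi (0:ℝ)) (psiF a) := by
  apply strictConcaveOn_of_deriv2_neg (convex_Ioi 0)
  · intro x hx
    exact (hasDerivAt_psiF a (fun i => (vpos a hx i).ne')).continuousAt.continuousWithinAt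
  · intro x hx
    rw [interior_Ioi] at hx
    have hev : deriv (psiF a) =ᶠ[nhds x] psiF1 a := by
      filter_upwards [isOpen_Ioi.mem_nhds hx] with y hy
      exact (hasDerivAt_psiF a (fun i => (vpos a hy i).ne')).deriv
    have h2 : deriv (deriv (psiF a)) x = psiF2 a x := by
      rw [hev.deriv_eq]
      exact (hasDerivAt_psiF1 a (vpos a hx)).deriv
    have h3 : deriv^[2] (psiF a) x = deriv (deriv (psiF a)) x := by
      simp [Function.iterate_succ, Function.iterate_one]
    rw [h3, h2]
    exact psiF2_neg a hN ha hx

/-- A strictly concave function has at most two zeros. -/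
lemma psiF_zeros_encard (a : Fin N → ℝ) (hN : 1 ≤ N) (ha : ∀ i, a i ≠ 0) :
    {u : ℝ | 0 < u ∧ psiF a u = 0}.encard ≤ 2 := by
  by_contra h
  push_neg at h
  have h3 : (3 : ℕ∞) ≤ {u : ℝ | 0 < u ∧ psiF a u = 0}.encard := Order.add_one_le_of_lt h
  obtain ⟨g, hg, hgA⟩ := exists_strictMono_of_encard h3
  have hc := strictConcave_psiF a hN ha
  set x := g 0; set y := g 1; set z := g 2
  have hxy : x < y := hg (by decide : (0:Fin 3) < 1)
  have hyz : y < z := hg (by decide : (1:Fin 3) < 2)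
  obtain ⟨hx0, hxf⟩ := hgA 0
  obtain ⟨hy0, hyf⟩ := hgA 1
  obtain ⟨hz0, hzf⟩ := hgA 2
  have hxz : x < z := hxy.trans hyz
  have hd : (0:ℝ) < z - x := by linarith
  have hl : (0:ℝ) < (z - y)/(z - x) := div_pos (by linarith) hd
  have hm : (0:ℝ) < (y - x)/(z - x) := div_pos (by linarith) hd
  have hsum : (z - y)/(z - x) + (y - x)/(z - x) = 1 := by field_simp; ring
  have hcomb : ((z - y)/(z - x)) • x + ((y - x)/(z - x)) • z = y := by
    rw [smul_eq_mul, smul_eq_mul]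
    field_simp
    ring
  have := hc.2 (Set.mem_Ioi.mpr hx0) (Set.mem_Ioi.mpr hz0) (ne_of_lt hxz) hl hm hsum
  rw [hcomb, hxf, hzf, hyf] at this
  simp at this

lemma hasDerivAt_Pf (a : Fin N → ℝ) (u : ℝ) : HasDerivAt (Pf a) (Pd a u) u := by
  have h : ∀ i ∈ Finset.univ, HasDerivAt (fun x : ℝ => x + a i ^ 2) 1 u :=
    fun i _ => (hasDerivAt_id u).add_const _
  have := HasDerivAt.fun_finsetProd h
  simp at this
  exact this

lemma Pf_pos (a : Fin N → ℝ) {u : ℝ} (hu : 0 < u) : 0 < Pf a u :=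
  Finset.prod_pos (fun i _ => by positivity)

lemma Pd_eq (a : Fin N → ℝ) {u : ℝ} (hu : 0 < u) :
    Pd a u = Pf a u * ∑ i, (u + a i ^ 2)⁻¹ := by
  unfold Pd Pf
  rw [Finset.mul_sum]
  apply Finset.sum_congr rfl
  intro i _
  have hv : (0:ℝ) < u + a i ^ 2 := by positivity
  field_simp
  rw [mul_comm]
  exact Finset.mul_prod_erase Finset.univ (fun j => u + a j ^ 2) (Finset.mem_univ i)

lemma hasDerivAt_phiF (a : Fin N → ℝ) {u : ℝ} (hu : 0 < u) :
    HasDerivAt (phiF a) (phiD a u) u := by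
  have h1 : HasDerivAt (fun x : ℝ => (1 - x) ^ 2 * (Pf a x) ^ 2)
      ((-2) * (1 - u) * (Pf a u) ^ 2 + (1 - u) ^ 2 * (2 * Pf a u * Pd a u)) u := by
    have ha : HasDerivAt (fun x : ℝ => (1 - x) ^ 2) ((-2) * (1 - u)) u := by
      have h0 : HasDerivAt (fun x : ℝ => 1 - x) (-1 : ℝ) u := (hasDerivAt_id u).const_sub 1
      have := h0.fun_pow 2
      convert! this using 1; ring
    have hb : HasDerivAt (fun x : ℝ => (Pf a x) ^ 2) (2 * Pf a u * Pd a u) u := by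
      have := (hasDerivAt_Pf a u).fun_pow 2
      convert! this using 1; ring
    exact ha.fun_mul hb
  exact h1.fun_div (hasDerivAt_id u) hu.ne'

lemma phiD_eq (a : Fin N → ℝ) {u : ℝ} (hu : 0 < u) :
    phiD a u = (1 - u) * (Pf a u) ^ 2 * psiF a u / u ^ 2 := by
  unfold phiD psiF
  rw [Pd_eq a hu]
  have h2 : (u:ℝ) ^ 2 ≠ 0 := by positivity
  field_simp
  ring

lemma phiD_zero (a : Fin N → ℝ) {u : ℝ} (hu : 0 < u) (h : phiD a u = 0) :
    u = 1 ∨ psiF a u = 0 := by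
  rw [phiD_eq a hu] at h
  have hP : Pf a u ≠ 0 := (Pf_pos a hu).ne'
  have h2 : (u:ℝ) ^ 2 ≠ 0 := by positivity
  rcases mul_eq_zero.mp ((div_eq_zero_iff.mp h).resolve_right h2) with h3 | h3
  · rcases mul_eq_zero.mp h3 with h4 | h4
    · left; linarith
    · exact absurd h4 (pow_ne_zero 2 hP)
  · right; exact h3

/-- Any level set of `φ` in `(0, ∞)` has at most four points. -/
lemma phiF_level_encard (a : Fin N → ℝ) (hN : 1 ≤ N) (ha : ∀ i, a i ≠ 0) (c : ℝ) :
    {u : ℝ | 0 < u ∧ phiF a u = c}.encard ≤ 4 := by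
  by_contra h
  push_neg at h
  have h5 : (5 : ℕ∞) ≤ {u : ℝ | 0 < u ∧ phiF a u = c}.encard := Order.add_one_le_of_lt h
  obtain ⟨g, hg, hgA⟩ := exists_strictMono_of_encard h5
  have hgpos : ∀ k, 0 < g k := fun k => (hgA k).1
  -- Rolle between consecutive level points
  have hy : ∀ i : Fin 4, ∃ y ∈ Set.Ioo (g i.castSucc) (g i.succ), phiD a y = 0 := by
    intro i
    have hab : g i.castSucc < g i.succ := hg (Fin.castSucc_lt_succ (i := i))
    have hcont : ContinuousOn (phiF a) (Set.Icc (g i.castSucc) (g i.succ)) := by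
      intro x hx
      have hx0 : 0 < x := lt_of_lt_of_le (hgpos i.castSucc) hx.1
      exact (hasDerivAt_phiF a hx0).continuousAt.continuousWithinAt
    have heq : phiF a (g i.castSucc) = phiF a (g i.succ) := by
      rw [(hgA i.castSucc).2, (hgA i.succ).2]
    exact exists_hasDerivAt_eq_zero hab hcont heq
      (fun x hx => hasDerivAt_phiF a (lt_trans (hgpos i.castSucc) hx.1))
  choose y hymem hyzero using hy
  have hypos : ∀ i, 0 < y i := fun i => lt_trans (hgpos _) (hymem i).1
  have hyinj : StrictMono y := by
    intro i j hij
    have h1 : y i < g i.succ := (hymem i).2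
    have h2 : g j.castSucc < y j := (hymem j).1
    have h3 : g i.succ ≤ g j.castSucc := by
      apply hg.monotone
      rw [Fin.le_def, Fin.val_succ, Fin.coe_castSucc]
      exact hij
    linarith
  -- every `y i` lies in `Z`
  set Z : Set ℝ := insert (1:ℝ) {u : ℝ | 0 < u ∧ psiF a u = 0} with hZ
  have hyZ : ∀ i, y i ∈ Z := by
    intro i
    rcases phiD_zero a (hypos i) (hyzero i) with h1 | h1
    · exact Or.inl h1
    · exact Or.inr ⟨hypos i, h1⟩
  have h4Z : (4 : ℕ∞) ≤ Z.encard := by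
    have : Set.range y ⊆ Z := Set.range_subset_iff.mpr hyZ
    calc (4 : ℕ∞) = (Set.range y).encard := by
          rw [← Set.image_univ, Set.InjOn.encard_image (hyinj.injective.injOn)]
          simp [Set.encard_univ]
      _ ≤ Z.encard := Set.encard_mono this
  have hZ3 : Z.encard ≤ 3 := by
    calc Z.encard ≤ {u : ℝ | 0 < u ∧ psiF a u = 0}.encard + 1 := by
          rw [hZ]
          exact Set.encard_insert_le _ _
      _ ≤ 2 + 1 := by gcongr; exact psiF_zeros_encard a hN ha
      _ = 3 := by norm_num
  have := h4Z.trans hZ3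
  norm_num at this
end Derivs

/-- Let `N ≥ 1`, let `a 0, …, a (N-1)` be nonzero reals and `m` a real.
Then the polynomial `F̂(x) = (1 - x²) ∏ᵢ (x² + aᵢ²) + 2 m x` has at most four
distinct real roots. -/
theorem horizon_polynomial_at_most_four_roots
    (N : ℕ) (hN : 1 ≤ N) (a : Fin N → ℝ) (ha : ∀ i, a i ≠ 0) (m : ℝ) :
    {x : ℝ | (1 - x ^ 2) * (∏ i, (x ^ 2 + a i ^ 2)) + 2 * m * x = 0}.encard ≤ 4 := by
  set S := {x : ℝ | (1 - x ^ 2) * (∏ i, (x ^ 2 + a i ^ 2)) + 2 * m * x = 0} with hS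
  by_cases hm : m = 0
  · -- with `m = 0` the roots are exactly `±1`
    have hSeq : S = {-1, 1} := by
      ext x
      simp only [hS, Set.mem_setOf_eq, hm, Set.mem_insert_iff, Set.mem_singleton_iff]
      constructor
      · intro hx
        have hprod : (0:ℝ) < ∏ i, (x ^ 2 + a i ^ 2) :=
          Finset.prod_pos (fun i _ => by have := sq_pos_iff.mpr (ha i); positivity)
        have h1 : (1 - x ^ 2) * (∏ i, (x ^ 2 + a i ^ 2)) = 0 := by linarith
        have h2 : (1 - x ^ 2) = 0 := by
          rcases mul_eq_zero.mp h1 with h | h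
          · exact h
          · exact absurd h hprod.ne'
        have h3 : (x - 1) * (x + 1) = 0 := by nlinarith
        rcases mul_eq_zero.mp h3 with h | h
        · right; linarith
        · left; linarith
      · intro hx
        rcases hx with h | h <;> rw [h] <;> ring
    rw [hSeq]
    rw [Set.encard_pair (by norm_num : (-1:ℝ) ≠ 1)]
    norm_num
  · -- main case `m ≠ 0`: square the roots into a level set of `φ`
    have h0S : (0:ℝ) ∉ S := by
      simp only [hS, Set.mem_setOf_eq]
      have hpos : (0:ℝ) < ∏ i, a i ^ 2 :=
        Finset.prod_pos (fun i _ => sq_pos_iff.mpr (ha i))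
      intro hc
      norm_num at hc
      exact absurd hc hpos.ne'
    have hinj : Set.InjOn (fun x : ℝ => x ^ 2) S := by
      intro x hx y hyy hxy
      simp only at hxy
      have hcases : x = y ∨ x = -y := by
        have : (x - y) * (x + y) = 0 := by nlinarith [hxy]
        rcases mul_eq_zero.mp this with h | h
        · left; linarith
        · right; linarith
      rcases hcases with h | h
      · exact h
      · -- then both `y` and `-y` are roots, forcing `y = 0`, impossible
        subst h
        have h1 : (1 - y ^ 2) * (∏ i, (y ^ 2 + a i ^ 2)) + 2 * m * y = 0 := hyy
        have h2 : (1 - y ^ 2) * (∏ i, (y ^ 2 + a i ^ 2)) + 2 * m * (-y) = 0 := by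
          have h2' := hx
          simp only [hS, Set.mem_setOf_eq] at h2'
          rw [show ((-y:ℝ)) ^ 2 = y ^ 2 by ring] at h2'
          exact h2'
        have hy0 : y = 0 := by
          have : 4 * m * y = 0 := by linarith
          rcases mul_eq_zero.mp this with h | h
          · rcases mul_eq_zero.mp h with h | h
            · norm_num at h
            · exact absurd h hm
          · exact h
        subst hy0
        norm_num
    have himage : (fun x : ℝ => x ^ 2) '' S ⊆ {u : ℝ | 0 < u ∧ phiF a u = 4 * m ^ 2} := by
      rintro u ⟨x, hx, rfl⟩
      have hx0 : x ≠ 0 := fun h => h0S (h ▸ hx)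
      have hu : 0 < x ^ 2 := by positivity
      refine ⟨hu, ?_⟩
      have hroot : (1 - x ^ 2) * (∏ i, (x ^ 2 + a i ^ 2)) = -(2 * m * x) := by
        have := hx
        simp only [hS, Set.mem_setOf_eq] at this
        linarith
      have hPeq : Pf a (x ^ 2) = ∏ i, (x ^ 2 + a i ^ 2) := rfl
      simp only [phiF, hPeq]
      rw [div_eq_iff hu.ne']
      have hsq := congrArg (fun t : ℝ => t ^ 2) hroot
      linear_combination hsq
    calc S.encard = ((fun x : ℝ => x ^ 2) '' S).encard := (hinj.encard_image).symm
      _ ≤ {u : ℝ | 0 < u ∧ phiF a u = 4 * m ^ 2}.encard := Set.encard_mono himage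
      _ ≤ 4 := phiF_level_encard a hN ha _
end

section
/- Let N ≥ 1 be an integer and a_1, …, a_N real numbers. Define h_1^{[k]} = −1 + Σ_{i=k+1}^{N} a_i² for 0 ≤ k ≤ N, and recursively h_ℓ^{[k]} = Σ_{i=k+1}^{N+2−ℓ} a_i² · h_{ℓ−1}^{[i]} for 2 ≤ ℓ ≤ N (sums over an empty index range are zero). Then for all integers i ∈ [1, N] and k₀ ∈ [0, N]: if h_i^{[k₀]} ≤ 0, then h_i^{[k]} ≤ 0 for every integer k with k₀ ≤ k ≤ N. -/
/-- The recursively defined coefficients `h_ℓ^{[k]}` appearing in the expansion of the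
horizon polynomial: `h 1 k = -1 + ∑_{i=k+1}^N aᵢ²` and
`h ℓ k = ∑_{i=k+1}^{N+2-ℓ} aᵢ² · h (ℓ-1) i` for `ℓ ≥ 2` (empty sums are zero). -/
noncomputable def hcoef (N : ℕ) (a : ℕ → ℝ) : ℕ → ℕ → ℝ
  | 0, _ => 0
  | 1, k => -1 + ∑ i ∈ Finset.Icc (k + 1) N, (a i) ^ 2
  | (ℓ + 2), k => ∑ i ∈ Finset.Icc (k + 1) (N + 2 - (ℓ + 2)), (a i) ^ 2 * hcoef N a (ℓ + 1) i

lemma hcoef_key (N : ℕ) (a : ℕ → ℝ) :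
    ∀ ℓ, 1 ≤ ℓ → ∀ k₀ k : ℕ, k₀ ≤ k → hcoef N a ℓ k₀ ≤ 0 → hcoef N a ℓ k ≤ 0 := by
  intro ℓ
  induction ℓ with
  | zero => omega
  | succ m ih =>
    cases m with
    | zero =>
      intro _ k₀ k hk h0
      simp only [hcoef] at *
      have hsum : ∑ i ∈ Finset.Icc (k+1) N, (a i)^2 ≤ ∑ i ∈ Finset.Icc (k₀+1) N, (a i)^2 := by
        apply Finset.sum_le_sum_of_subset_of_nonneg
        · intro x hx
          simp only [Finset.mem_Icc] at *
          omega
        · intros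
          positivity
      linarith
    | succ m' =>
      intro _ k₀ k hk h0
      have ihm := ih (by omega)
      by_cases hcase : ∃ j ∈ Finset.Icc (k₀+1) k, hcoef N a (m'+1) j ≤ 0
      · obtain ⟨j, hj, hjle⟩ := hcase
        simp only [Finset.mem_Icc] at hj
        show hcoef N a (m'+2) k ≤ 0
        rw [show hcoef N a (m'+2) k =
            ∑ i ∈ Finset.Icc (k + 1) (N + 2 - (m' + 2)),
              (a i) ^ 2 * hcoef N a (m' + 1) i from rfl]
        apply Finset.sum_nonpos
        intro i hi
        simp only [Finset.mem_Icc] at hi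
        have hle := ihm j i (by omega) hjle
        exact mul_nonpos_of_nonneg_of_nonpos (by positivity) hle
      · push_neg at hcase
        have h0' : hcoef N a (m'+2) k₀ =
            ∑ i ∈ Finset.Icc (k₀ + 1) (N + 2 - (m' + 2)),
              (a i) ^ 2 * hcoef N a (m' + 1) i := rfl
        have hk' : hcoef N a (m'+2) k =
            ∑ i ∈ Finset.Icc (k + 1) (N + 2 - (m' + 2)),
              (a i) ^ 2 * hcoef N a (m' + 1) i := rfl
        rw [hk']
        rw [h0'] at h0
        refine le_trans (Finset.sum_le_sum_of_subset_of_nonneg ?_ ?_) h0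
        · intro x hx
          simp only [Finset.mem_Icc] at *
          omega
        · intro j hj hnj
          simp only [Finset.mem_Icc] at hj hnj
          have hmem : j ∈ Finset.Icc (k₀+1) k := Finset.mem_Icc.mpr (by omega)
          exact mul_nonneg (by positivity) (le_of_lt (hcase j hmem))

/-- For integers `i ∈ [1, N]` and `k₀ ∈ [0, N]`: if `h_i^{[k₀]} ≤ 0`, then
`h_i^{[k]} ≤ 0` for every integer `k` with `k₀ ≤ k ≤ N`. -/
theorem hcoef_nonpos_monotone
    (N : ℕ) (hN : 1 ≤ N) (a : ℕ → ℝ)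
    (i k₀ : ℕ) (hi1 : 1 ≤ i) (hiN : i ≤ N) (hk₀ : k₀ ≤ N)
    (h0 : hcoef N a i k₀ ≤ 0) :
    ∀ k : ℕ, k₀ ≤ k → k ≤ N → hcoef N a i k ≤ 0 := by
  intro k hk _
  exact hcoef_key N a i hi1 k₀ k hk h0
end

section
/- Let N ≥ 1 be an integer and a_1, …, a_N real numbers, and define h_ℓ^{[k]} by h_1^{[k]} = −1 + Σ_{i=k+1}^{N} a_i² and h_ℓ^{[k]} = Σ_{i=k+1}^{N+2−ℓ} a_i² · h_{ℓ−1}^{[i]} for ℓ ≥ 2 (empty sums are zero). Then the finite sequence (1, h_1^{[0]}, h_2^{[0]}, …, h_N^{[0]}) has at most one change of sign; precisely, for all integers 1 ≤ i ≤ j ≤ N, if h_i^{[0]} ≤ 0 then h_j^{[0]} ≤ 0. -/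
/-- Key lemma: if `h_ℓ^{[k]} ≤ 0` then `h_ℓ^{[k']} ≤ 0` for all `k' ≥ k`. -/
lemma hcoef_mono_nonpos (N : ℕ) (a : ℕ → ℝ) :
    ∀ ℓ k k' : ℕ, k ≤ k' → hcoef N a ℓ k ≤ 0 → hcoef N a ℓ k' ≤ 0 := by
  intro ℓ
  induction ℓ using Nat.strong_induction_on with
  | _ ℓ IH =>
    match ℓ with
    | 0 => intro k k' _ h; simpa [hcoef] using h
    | 1 =>
      intro k k' hkk h
      simp only [hcoef] at h ⊢
      have hsub : ∑ i ∈ Finset.Icc (k' + 1) N, (a i) ^ 2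
          ≤ ∑ i ∈ Finset.Icc (k + 1) N, (a i) ^ 2 := by
        apply Finset.sum_le_sum_of_subset_of_nonneg
        · exact Finset.Icc_subset_Icc_left (by omega)
        · intro i _ _; exact sq_nonneg _
      linarith
    | (m + 2) =>
      intro k k' hkk h
      simp only [hcoef] at h ⊢
      by_cases hpos : ∀ i ∈ Finset.Icc (k + 1) k', 0 ≤ hcoef N a (m + 1) i
      · refine le_trans ?_ h
        apply Finset.sum_le_sum_of_subset_of_nonneg
        · exact Finset.Icc_subset_Icc_left (by omega)
        · intro i hi hni
          simp only [Finset.mem_Icc] at hi hni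
          have hik : i ≤ k' := by omega
          have := hpos i (Finset.mem_Icc.mpr ⟨hi.1, hik⟩)
          exact mul_nonneg (sq_nonneg _) this
      · push_neg at hpos
        obtain ⟨t, ht, htneg⟩ := hpos
        simp only [Finset.mem_Icc] at ht
        apply Finset.sum_nonpos
        intro i hi
        simp only [Finset.mem_Icc] at hi
        have : hcoef N a (m + 1) i ≤ 0 :=
          IH (m + 1) (by omega) t i (by omega) htneg.le
        exact mul_nonpos_iff.mpr (Or.inl ⟨sq_nonneg _, this⟩)

lemma hcoef_step (N : ℕ) (a : ℕ → ℝ) (ℓ : ℕ) (hℓ : 1 ≤ ℓ)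
    (h : hcoef N a ℓ 0 ≤ 0) : hcoef N a (ℓ + 1) 0 ≤ 0 := by
  obtain ⟨m, rfl⟩ : ∃ m, ℓ = m + 1 := ⟨ℓ - 1, by omega⟩
  show hcoef N a (m + 2) 0 ≤ 0
  simp only [hcoef]
  apply Finset.sum_nonpos
  intro i _
  have := hcoef_mono_nonpos N a (m + 1) 0 i (Nat.zero_le i) h
  exact mul_nonpos_iff.mpr (Or.inl ⟨sq_nonneg _, this⟩)

/-- The sequence `(1, h_1^{[0]}, …, h_N^{[0]})` has at most one change of
sign: for all integers `1 ≤ i ≤ j ≤ N`, if `h_i^{[0]} ≤ 0` then `h_j^{[0]} ≤ 0`. -/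
theorem hcoef_at_most_one_sign_change
    (N : ℕ) (hN : 1 ≤ N) (a : ℕ → ℝ) :
    ∀ i j : ℕ, 1 ≤ i → i ≤ j → j ≤ N → hcoef N a i 0 ≤ 0 → hcoef N a j 0 ≤ 0 := by
  intro i j hi hij hjN h
  induction j, hij using Nat.le_induction with
  | base => exact h
  | succ n hn IHn =>
    exact hcoef_step N a n (le_trans hi hn) (IHn (by omega))
end

section
/- Let N ≥ 1 be an integer and a_1, …, a_N real numbers. With h_ℓ^{[k]} defined by h_1^{[k]} = −1 + Σ_{i=k+1}^{N} a_i² and h_ℓ^{[k]} = Σ_{i=k+1}^{N+2−ℓ} a_i² · h_{ℓ−1}^{[i]} for ℓ ≥ 2 (empty sums zero), and with A_k = Σ_{1 ≤ i_1 < … < i_k ≤ N} a_{i_1}² ⋯ a_{i_k}² the elementary symmetric polynomials of (a_1², …, a_N²) and A_0 = 1, one has h_ℓ^{[0]} = A_ℓ − A_{ℓ−1} for every integer 1 ≤ ℓ ≤ N. -/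
/-- `A k = ∑_{1 ≤ i₁ < … < i_k ≤ N} a_{i₁}² ⋯ a_{i_k}²`, the `k`-th elementary symmetric
polynomial of `(a₁², …, a_N²)`; note `A 0 = 1`. -/
noncomputable def esymA (N : ℕ) (a : ℕ → ℝ) (k : ℕ) : ℝ :=
  ∑ t ∈ Finset.powersetCard k (Finset.Icc 1 N), ∏ i ∈ t, (a i) ^ 2

/-- Auxiliary: elementary symmetric polynomial of `(a_{k+1}², …, a_N²)`. -/
noncomputable def Eaux (N : ℕ) (a : ℕ → ℝ) (k m : ℕ) : ℝ :=
  ∑ t ∈ Finset.powersetCard m (Finset.Icc (k + 1) N), ∏ i ∈ t, (a i) ^ 2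

lemma Eaux_vanish (N : ℕ) (a : ℕ → ℝ) {k m : ℕ} (h : N < m + k) (hm : 1 ≤ m) :
    Eaux N a k m = 0 := by
  rw [Eaux, Finset.powersetCard_eq_empty.2, Finset.sum_empty]
  rw [Nat.card_Icc]; omega

lemma Eaux_rec_aux (N : ℕ) (a : ℕ → ℝ) (m : ℕ) :
    ∀ n k, N ≤ k + n →
      Eaux N a k (m + 1) = ∑ i ∈ Finset.Icc (k + 1) N, (a i) ^ 2 * Eaux N a i m := by
  intro n
  induction n with
  | zero =>
    intro k hk
    rw [Eaux, Finset.Icc_eq_empty (show ¬ k + 1 ≤ N by omega),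
      Finset.powersetCard_eq_empty.2 (by simp), Finset.sum_empty, Finset.sum_empty]
  | succ n ih =>
    intro k hk
    by_cases hk' : N ≤ k + n
    · exact ih k hk'
    · have hkN : k + 1 ≤ N := by omega
      have hx : (k + 1) ∉ Finset.Icc (k + 2) N := by simp
      have hins : insert (k + 1) (Finset.Icc (k + 2) N) = Finset.Icc (k + 1) N :=
        Finset.insert_Icc_add_one_left_eq_Icc hkN
      have hsplit : Finset.powersetCard (m + 1) (Finset.Icc (k + 1) N)
          = Finset.powersetCard (m + 1) (Finset.Icc (k + 2) N) ∪
            (Finset.powersetCard m (Finset.Icc (k + 2) N)).image (insert (k + 1)) := by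
        rw [← hins, Finset.powersetCard_succ_insert hx]
      have hdisj : Disjoint (Finset.powersetCard (m + 1) (Finset.Icc (k + 2) N))
          ((Finset.powersetCard m (Finset.Icc (k + 2) N)).image (insert (k + 1))) := by
        rw [Finset.disjoint_left]
        intro t ht ht'
        obtain ⟨u, hu, rfl⟩ := Finset.mem_image.1 ht'
        have := (Finset.mem_powersetCard.1 ht).1 (Finset.mem_insert_self (k + 1) u)
        exact hx this
      rw [Eaux, hsplit, Finset.sum_union hdisj]
      rw [Finset.sum_image (by
        intro x hxm y hym hxy
        have hx' : (k + 1) ∉ x := fun h => hx ((Finset.mem_powersetCard.1 hxm).1 h)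
        have hy' : (k + 1) ∉ y := fun h => hx ((Finset.mem_powersetCard.1 hym).1 h)
        rw [← Finset.erase_insert hx', ← Finset.erase_insert hy', hxy])]
      have hprod : ∀ t ∈ Finset.powersetCard m (Finset.Icc (k + 2) N),
          (∏ i ∈ insert (k + 1) t, (a i) ^ 2) = (a (k + 1)) ^ 2 * ∏ i ∈ t, (a i) ^ 2 := by
        intro t ht
        exact Finset.prod_insert (fun h => hx ((Finset.mem_powersetCard.1 ht).1 h))
      rw [Finset.sum_congr rfl hprod, ← Finset.mul_sum]
      rw [← hins, Finset.sum_insert hx]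
      have hIH := ih (k + 1) (by omega)
      rw [Eaux] at hIH
      rw [hIH]
      rw [Eaux]
      ring

lemma Eaux_rec (N : ℕ) (a : ℕ → ℝ) (m k : ℕ) :
    Eaux N a k (m + 1) = ∑ i ∈ Finset.Icc (k + 1) N, (a i) ^ 2 * Eaux N a i m :=
  Eaux_rec_aux N a m N k (by omega)

lemma Eaux_one (N : ℕ) (a : ℕ → ℝ) (k : ℕ) :
    Eaux N a k 1 = ∑ i ∈ Finset.Icc (k + 1) N, (a i) ^ 2 := by
  rw [show (1 : ℕ) = 0 + 1 from rfl, Eaux_rec]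
  refine Finset.sum_congr rfl fun i _ => ?_
  simp [Eaux]

lemma hcoef_eq_Eaux (N : ℕ) (a : ℕ → ℝ) :
    ∀ ℓ k : ℕ, hcoef N a (ℓ + 1) k = Eaux N a k (ℓ + 1) - Eaux N a k ℓ := by
  intro ℓ
  induction ℓ with
  | zero =>
    intro k
    rw [hcoef, Eaux_one]
    simp [Eaux]
    ring
  | succ ℓ ih =>
    intro k
    rw [hcoef]
    have h1 : ∀ i ∈ Finset.Icc (k + 1) (N + 2 - (ℓ + 2)),
        (a i) ^ 2 * hcoef N a (ℓ + 1) i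
          = (a i) ^ 2 * Eaux N a i (ℓ + 1) - (a i) ^ 2 * Eaux N a i ℓ := by
      intro i _
      rw [ih i]; ring
    rw [Finset.sum_congr rfl h1, Finset.sum_sub_distrib]
    have hsub : Finset.Icc (k + 1) (N + 2 - (ℓ + 2)) ⊆ Finset.Icc (k + 1) N := by
      apply Finset.Icc_subset_Icc_right; omega
    have e1 : ∑ i ∈ Finset.Icc (k + 1) (N + 2 - (ℓ + 2)), (a i) ^ 2 * Eaux N a i (ℓ + 1)
        = ∑ i ∈ Finset.Icc (k + 1) N, (a i) ^ 2 * Eaux N a i (ℓ + 1) := by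
      refine Finset.sum_subset hsub fun x hxmem hxnot => ?_
      have hx1 := Finset.mem_Icc.1 hxmem
      have hx2 : ¬ (k + 1 ≤ x ∧ x ≤ N + 2 - (ℓ + 2)) := fun h => hxnot (Finset.mem_Icc.2 h)
      rw [Eaux_vanish N a (by omega) (by omega), mul_zero]
    have e2 : ∑ i ∈ Finset.Icc (k + 1) (N + 2 - (ℓ + 2)), (a i) ^ 2 * Eaux N a i ℓ
        = ∑ i ∈ Finset.Icc (k + 1) N, (a i) ^ 2 * Eaux N a i ℓ := by
      refine Finset.sum_subset hsub fun x hxmem hxnot => ?_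
      have hx1 := Finset.mem_Icc.1 hxmem
      have hx2 : ¬ (k + 1 ≤ x ∧ x ≤ N + 2 - (ℓ + 2)) := fun h => hxnot (Finset.mem_Icc.2 h)
      cases Nat.eq_zero_or_pos ℓ with
      | inl h0 => omega
      | inr hpos => rw [Eaux_vanish N a (by omega) (by omega), mul_zero]
    rw [e1, e2, ← Eaux_rec, ← Eaux_rec]

/-- For every integer `1 ≤ ℓ ≤ N` one has `h_ℓ^{[0]} = A_ℓ - A_{ℓ-1}`. -/
theorem hcoef_eq_esym_diff
    (N : ℕ) (hN : 1 ≤ N) (a : ℕ → ℝ) :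
    ∀ ℓ : ℕ, 1 ≤ ℓ → ℓ ≤ N → hcoef N a ℓ 0 = esymA N a ℓ - esymA N a (ℓ - 1) := by
  intro ℓ hℓ _
  obtain ⟨m, rfl⟩ := Nat.exists_eq_add_of_le hℓ
  have := hcoef_eq_Eaux N a m 0
  simpa [esymA, Eaux, Nat.add_comm 1 m] using this
end

section
/- Let N ≥ 1 be an integer, ℓ > 0, m ≠ 0, and a_1, …, a_N nonzero real numbers. Define F(r) = (ℓ² − r²)·∏_{i=1}^N (r² + a_i²) + 2ℓ²·m·r. If m > 0, then F has a root r_− with −ℓ < r_− < 0 and a root r_+ with r_+ > ℓ. If m < 0, then F has a root r_− with r_− < −ℓ and a root r_+ with 0 < r_+ < ℓ. -/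
lemma horizon_aux (N : ℕ) (hN : 1 ≤ N) (L : ℝ) (hL : 0 < L) (m : ℝ) (hm : 0 < m)
    (a : Fin N → ℝ) (ha : ∀ i, a i ≠ 0) :
    (∃ r : ℝ, (L ^ 2 - r ^ 2) * (∏ i, (r ^ 2 + a i ^ 2)) + 2 * L ^ 2 * m * r = 0 ∧
        -L < r ∧ r < 0) ∧
    (∃ r : ℝ, (L ^ 2 - r ^ 2) * (∏ i, (r ^ 2 + a i ^ 2)) + 2 * L ^ 2 * m * r = 0 ∧
        L < r) := by
  set f : ℝ → ℝ := fun r => (L ^ 2 - r ^ 2) * (∏ i, (r ^ 2 + a i ^ 2)) + 2 * L ^ 2 * m * r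
    with hfdef
  have hf : Continuous f := by
    apply Continuous.add
    · exact (continuous_const.sub (continuous_pow 2)).mul
        (continuous_finset_prod _ fun i _ => (continuous_pow 2).add continuous_const)
    · fun_prop
  constructor
  · -- root in (-L, 0)
    have hfL : f (-L) = -(2 * L ^ 2 * m * L) := by
      have h0 : L ^ 2 - (-L) ^ 2 = 0 := by ring
      simp only [hfdef, h0, zero_mul, zero_add]
      ring
    have hf0 : f 0 = L ^ 2 * ∏ i, (a i ^ 2) := by
      simp [hfdef]
    have h1 : f (-L) < 0 := by
      rw [hfL]
      have := mul_pos (mul_pos hm (pow_pos hL 2)) hL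
      linarith
    have h2' : 0 < f 0 := by
      rw [hf0]
      exact mul_pos (pow_pos hL 2)
        (Finset.prod_pos fun i _ => ((pow_ne_zero 2 (ha i)).symm).lt_of_le (sq_nonneg _))
    have := intermediate_value_Ioo (le_of_lt (by linarith : (-L:ℝ) < 0)) hf.continuousOn
    obtain ⟨r, hr, hfr⟩ := this ⟨h1, h2'⟩
    exact ⟨r, hfr, hr.1, hr.2⟩
  · -- root in (L, ∞)
    set r₀ : ℝ := 2 * L + m + 1 with hr₀
    have hr₀1 : (1:ℝ) ≤ r₀ := by simp [hr₀]; linarith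
    have hr₀L : L < r₀ := by simp [hr₀]; linarith
    have hP : r₀ ^ 2 ≤ ∏ i, (r₀ ^ 2 + a i ^ 2) := by
      calc r₀ ^ 2 = (r₀ ^ 2) ^ 1 := (pow_one _).symm
        _ ≤ (r₀ ^ 2) ^ N := pow_le_pow_right₀ (by nlinarith) hN
        _ = ∏ _i : Fin N, r₀ ^ 2 := by simp
        _ ≤ ∏ i, (r₀ ^ 2 + a i ^ 2) := Finset.prod_le_prod (fun i _ => by positivity)
            (fun i _ => by nlinarith [sq_nonneg (a i)])
    have hfr₀ : f r₀ < 0 := by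
      have hneg : L ^ 2 - r₀ ^ 2 < 0 := by nlinarith
      have hle : (L ^ 2 - r₀ ^ 2) * (∏ i, (r₀ ^ 2 + a i ^ 2)) ≤ (L ^ 2 - r₀ ^ 2) * r₀ ^ 2 :=
        mul_le_mul_of_nonpos_left hP (le_of_lt hneg)
      have hmain : (L ^ 2 - r₀ ^ 2) * r₀ ^ 2 + 2 * L ^ 2 * m * r₀ < 0 := by
        have hmr : m < r₀ := by simp [hr₀]; linarith
        have hr₀pos : 0 < r₀ := by linarith
        have h2L : 2 * L < r₀ := by simp [hr₀]; linarith
        have k1 : 3 * L ^ 2 < r₀ ^ 2 - L ^ 2 := by nlinarith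
        nlinarith [mul_lt_mul_of_pos_left hmr (show (0:ℝ) < 2 * L ^ 2 * r₀ by positivity),
          mul_lt_mul_of_pos_right k1 (show (0:ℝ) < r₀ ^ 2 by positivity),
          mul_pos (pow_pos hL 2) (pow_pos hr₀pos 2)]
      calc f r₀ ≤ (L ^ 2 - r₀ ^ 2) * r₀ ^ 2 + 2 * L ^ 2 * m * r₀ := by
            simp only [hfdef]; linarith
        _ < 0 := hmain
    have hfL : 0 < f L := by
      have h0 : L ^ 2 - L ^ 2 = 0 := by ring
      simp only [hfdef, h0, zero_mul, zero_add]
      positivity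
    have := intermediate_value_Ioo' (le_of_lt hr₀L) hf.continuousOn
    obtain ⟨r, hr, hfr⟩ := this ⟨hfr₀, hfL⟩
    exact ⟨r, hfr, hr.1⟩

/-- For `F(r) = (ℓ² - r²) ∏ᵢ (r² + aᵢ²) + 2 ℓ² m r` with `ℓ > 0`, `m ≠ 0`
and all rotation parameters `aᵢ ≠ 0`: if `m > 0` then `F` has a root in `(-ℓ, 0)` and a
root in `(ℓ, ∞)`; if `m < 0` then `F` has a root in `(-∞, -ℓ)` and a root in `(0, ℓ)`. -/
theorem horizon_function_root_location
    (N : ℕ) (hN : 1 ≤ N) (L : ℝ) (hL : 0 < L) (m : ℝ) (hm : m ≠ 0)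
    (a : Fin N → ℝ) (ha : ∀ i, a i ≠ 0) :
    (0 < m →
      (∃ r : ℝ, (L ^ 2 - r ^ 2) * (∏ i, (r ^ 2 + a i ^ 2)) + 2 * L ^ 2 * m * r = 0 ∧
        -L < r ∧ r < 0) ∧
      (∃ r : ℝ, (L ^ 2 - r ^ 2) * (∏ i, (r ^ 2 + a i ^ 2)) + 2 * L ^ 2 * m * r = 0 ∧
        L < r)) ∧
    (m < 0 →
      (∃ r : ℝ, (L ^ 2 - r ^ 2) * (∏ i, (r ^ 2 + a i ^ 2)) + 2 * L ^ 2 * m * r = 0 ∧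
        r < -L) ∧
      (∃ r : ℝ, (L ^ 2 - r ^ 2) * (∏ i, (r ^ 2 + a i ^ 2)) + 2 * L ^ 2 * m * r = 0 ∧
        0 < r ∧ r < L)) := by
  constructor
  · intro hm' ; exact horizon_aux N hN L hL m hm' a ha
  · intro hm'
    obtain ⟨⟨r₁, h1, h2, h3⟩, ⟨r₂, h4, h5⟩⟩ :=
      horizon_aux N hN L hL (-m) (by linarith) a ha
    have e1 : ((-r₁) : ℝ) ^ 2 = r₁ ^ 2 := by ring
    have e2 : ((-r₂) : ℝ) ^ 2 = r₂ ^ 2 := by ring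
    refine ⟨⟨-r₂, ?_, by linarith⟩, ⟨-r₁, ?_, by linarith, by linarith⟩⟩
    · rw [e2]; linear_combination h4
    · rw [e1]; linear_combination h1
end

section
/- Let N ≥ 1 be an integer, ℓ > 0, and a_1, …, a_N nonzero real numbers. There exists ε > 0 such that for every real m with |m| < ε, the polynomial F_m(r) = (ℓ² − r²)·∏_{i=1}^N (r² + a_i²) + 2ℓ²·m·r has exactly two distinct real roots. -/
open Finset

set_option maxHeartbeats 1000000

private noncomputable def Fh (N : ℕ) (L : ℝ) (a : Fin N → ℝ) (m r : ℝ) : ℝ :=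
  (L ^ 2 - r ^ 2) * (∏ i, (r ^ 2 + a i ^ 2)) + 2 * L ^ 2 * m * r

private lemma Fh_symm (N : ℕ) (L : ℝ) (a : Fin N → ℝ) (m r : ℝ) :
    Fh N L a (-m) (-r) = Fh N L a m r := by
  simp [Fh, neg_sq]

private lemma Fh_cont (N : ℕ) (L : ℝ) (a : Fin N → ℝ) (m : ℝ) :
    Continuous (Fh N L a m) := by
  unfold Fh
  exact ((continuous_const.sub (continuous_pow 2)).mul
    (continuous_finset_prod _ fun i _ => (continuous_pow 2).add continuous_const)).add
    (continuous_const.mul continuous_id)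

private lemma Fh_hasDeriv (N : ℕ) (L : ℝ) (a : Fin N → ℝ) (m x : ℝ) :
    HasDerivAt (Fh N L a m)
      (-(2 * x) * (∏ i, (x ^ 2 + a i ^ 2))
        + (L ^ 2 - x ^ 2) * (∑ i, (∏ j ∈ Finset.univ.erase i, (x ^ 2 + a j ^ 2)) * (2 * x))
        + 2 * L ^ 2 * m) x := by
  have hp : HasDerivAt (fun r : ℝ => ∏ i, (r ^ 2 + a i ^ 2))
      (∑ i, (∏ j ∈ Finset.univ.erase i, (x ^ 2 + a j ^ 2)) * (2 * x)) x := by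
    have h : ∀ i ∈ (Finset.univ : Finset (Fin N)),
        HasDerivAt (fun r : ℝ => r ^ 2 + a i ^ 2) (2 * x) x := by
      intro i _
      simpa using (hasDerivAt_pow 2 x).add_const ((a i) ^ 2)
    simpa [smul_eq_mul] using HasDerivAt.fun_finsetProd h
  have h1 : HasDerivAt (fun r : ℝ => L ^ 2 - r ^ 2) (-(2 * x)) x := by
    simpa using (hasDerivAt_pow 2 x).const_sub (L ^ 2)
  have h3 : HasDerivAt (fun r : ℝ => 2 * L ^ 2 * m * r) (2 * L ^ 2 * m) x := by
    simpa using (hasDerivAt_id x).const_mul (2 * L ^ 2 * m)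
  exact (h1.mul hp).add h3

private lemma Fh_unique_pos_root (N : ℕ) (hN : 1 ≤ N) (L : ℝ) (hL : 0 < L)
    (a : Fin N → ℝ) (ha : ∀ i, a i ≠ 0) :
    ∃ ε : ℝ, 0 < ε ∧ ∀ m : ℝ, |m| < ε →
      ∃! r : ℝ, 0 < r ∧ Fh N L a m r = 0 := by
  classical
  have ha2 : ∀ i, 0 < (a i) ^ 2 := fun i =>
    lt_of_le_of_ne (sq_nonneg _) (Ne.symm (pow_ne_zero 2 (ha i)))
  obtain ⟨c, hcdef⟩ : ∃ c : ℝ, c = ∏ i, (a i) ^ 2 := ⟨_, rfl⟩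
  have hc : 0 < c := hcdef ▸ Finset.prod_pos fun i _ => ha2 i
  have hPc : ∀ r : ℝ, c ≤ ∏ i, (r ^ 2 + a i ^ 2) := by
    intro r
    rw [hcdef]
    exact Finset.prod_le_prod (fun i _ => (ha2 i).le)
      (fun i _ => by linarith [sq_nonneg r])
  have hP0 : ∀ r : ℝ, 0 < ∏ i, (r ^ 2 + a i ^ 2) := fun r => lt_of_lt_of_le hc (hPc r)
  have hi₀ : (0 : ℕ) < N := hN
  set i₀ : Fin N := ⟨0, hi₀⟩ with hi₀def
  obtain ⟨c', hc'def⟩ : ∃ c' : ℝ, c' = ∏ i ∈ Finset.univ.erase i₀, (a i) ^ 2 := ⟨_, rfl⟩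
  have hc' : 0 < c' := hc'def ▸ Finset.prod_pos fun i _ => ha2 i
  have hPr : ∀ r : ℝ, c' * r ^ 2 ≤ ∏ i, (r ^ 2 + a i ^ 2) := by
    intro r
    have h1 : (∏ i, (r ^ 2 + a i ^ 2))
        = (r ^ 2 + a i₀ ^ 2) * ∏ i ∈ Finset.univ.erase i₀, (r ^ 2 + a i ^ 2) :=
      (Finset.mul_prod_erase Finset.univ _ (Finset.mem_univ i₀)).symm
    have h2 : c' ≤ ∏ i ∈ Finset.univ.erase i₀, (r ^ 2 + a i ^ 2) := by
      rw [hc'def]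
      exact Finset.prod_le_prod (fun i _ => (ha2 i).le)
        (fun i _ => by linarith [sq_nonneg r])
    have h3 : r ^ 2 * c' ≤ (r ^ 2 + a i₀ ^ 2) * ∏ i ∈ Finset.univ.erase i₀, (r ^ 2 + a i ^ 2) :=
      mul_le_mul (by linarith [ha2 i₀]) h2 hc'.le (by positivity)
    rw [h1]; linarith
  obtain ⟨K, hKdef⟩ : ∃ K : ℝ, K = ∏ i, (1 + (3 * L / 2) ^ 2 + (a i) ^ 2) := ⟨_, rfl⟩
  have hK0 : 0 < K := hKdef ▸ Finset.prod_pos fun i _ => by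
    nlinarith [sq_nonneg (3 * L / 2), ha2 i]
  have hKer : ∀ (i : Fin N) (r : ℝ), 0 ≤ r → r ≤ 3 * L / 2 →
      (∏ j ∈ Finset.univ.erase i, (r ^ 2 + a j ^ 2)) ≤ K := by
    intro i r hr0 hr1
    rw [hKdef]
    calc (∏ j ∈ Finset.univ.erase i, (r ^ 2 + a j ^ 2))
        ≤ ∏ j ∈ Finset.univ.erase i, (1 + (3 * L / 2) ^ 2 + (a j) ^ 2) := by
          refine Finset.prod_le_prod (fun j _ => by positivity) (fun j _ => ?_)
          nlinarith [mul_nonneg (by linarith : (0:ℝ) ≤ 3 * L / 2 - r)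
            (by linarith : (0:ℝ) ≤ 3 * L / 2 + r)]
      _ ≤ ∏ i, (1 + (3 * L / 2) ^ 2 + (a i) ^ 2) := by
          have hfac : (1:ℝ) ≤ 1 + (3 * L / 2) ^ 2 + (a i) ^ 2 := by
            nlinarith [sq_nonneg (3 * L / 2), ha2 i]
          have hnn : (0:ℝ) ≤ ∏ j ∈ Finset.univ.erase i, (1 + (3 * L / 2) ^ 2 + (a j) ^ 2) :=
            Finset.prod_nonneg fun j _ => by positivity
          calc (∏ j ∈ Finset.univ.erase i, (1 + (3 * L / 2) ^ 2 + (a j) ^ 2))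
              ≤ (1 + (3 * L / 2) ^ 2 + (a i) ^ 2)
                  * ∏ j ∈ Finset.univ.erase i, (1 + (3 * L / 2) ^ 2 + (a j) ^ 2) :=
                le_mul_of_one_le_left hnn hfac
            _ = ∏ i, (1 + (3 * L / 2) ^ 2 + (a i) ^ 2) :=
                Finset.mul_prod_erase Finset.univ
                  (fun j => 1 + (3 * L / 2) ^ 2 + (a j) ^ 2) (Finset.mem_univ i)
  have hN1 : (1 : ℝ) ≤ (N : ℝ) := by exact_mod_cast hN
  have hNKL : (0:ℝ) < 36 * L * N * K :=
    mul_pos (mul_pos (mul_pos (by norm_num) hL) (by linarith)) hK0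
  obtain ⟨δ, hδdef⟩ : ∃ δ : ℝ, δ = min (L / 2) (c / (36 * L * N * K)) := ⟨_, rfl⟩
  have hδ0 : 0 < δ := hδdef ▸ lt_min (by linarith) (div_pos hc hNKL)
  have hδL : δ ≤ L / 2 := hδdef ▸ min_le_left _ _
  have hδK : δ * (36 * L * N * K) ≤ c := by
    have h1 : δ ≤ c / (36 * L * N * K) := hδdef ▸ min_le_right _ _
    calc δ * (36 * L * N * K) ≤ (c / (36 * L * N * K)) * (36 * L * N * K) :=
          mul_le_mul_of_nonneg_right h1 hNKL.le
      _ = c := div_mul_cancel₀ _ hNKL.ne'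
  obtain ⟨ε, hεdef⟩ : ∃ ε : ℝ,
      ε = min (min (c / (8 * L)) (δ * c / (4 * L ^ 2))) (δ * c' / 2) := ⟨_, rfl⟩
  have hε0 : 0 < ε := hεdef ▸ lt_min
    (lt_min (div_pos hc (by positivity)) (div_pos (mul_pos hδ0 hc) (by positivity)))
    (by positivity)
  have hε1 : ε * (8 * L) ≤ c := by
    have h1 : ε ≤ c / (8 * L) := hεdef ▸ le_trans (min_le_left _ _) (min_le_left _ _)
    have h2 : (0:ℝ) < 8 * L := by positivity
    calc ε * (8 * L) ≤ (c / (8 * L)) * (8 * L) := mul_le_mul_of_nonneg_right h1 h2.le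
      _ = c := div_mul_cancel₀ _ h2.ne'
  have hε2 : ε * (4 * L ^ 2) ≤ δ * c := by
    have h1 : ε ≤ δ * c / (4 * L ^ 2) := hεdef ▸ le_trans (min_le_left _ _) (min_le_right _ _)
    have h2 : (0:ℝ) < 4 * L ^ 2 := by positivity
    calc ε * (4 * L ^ 2) ≤ (δ * c / (4 * L ^ 2)) * (4 * L ^ 2) :=
          mul_le_mul_of_nonneg_right h1 h2.le
      _ = δ * c := div_mul_cancel₀ _ h2.ne'
  have hε3 : 2 * ε ≤ δ * c' := by
    have h1 : ε ≤ δ * c' / 2 := hεdef ▸ min_le_right _ _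
    linarith
  refine ⟨ε, hε0, fun m hm => ?_⟩
  have hm1 : m ≤ ε := ((abs_lt.mp hm).2).le
  have hm2 : -ε ≤ m := ((abs_lt.mp hm).1).le
  have hFeq : ∀ r : ℝ, Fh N L a m r
      = (L ^ 2 - r ^ 2) * (∏ i, (r ^ 2 + a i ^ 2)) + 2 * L ^ 2 * m * r := fun r => rfl
  -- F is positive on [0, L - δ]
  have hleft : ∀ r : ℝ, 0 ≤ r → r ≤ L - δ → 0 < Fh N L a m r := by
    intro r h0 h1
    rw [hFeq r]
    have hr2 : r ^ 2 ≤ (L - δ) ^ 2 := by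
      nlinarith [mul_nonneg (by linarith : (0:ℝ) ≤ (L - δ) - r)
        (by linarith : (0:ℝ) ≤ (L - δ) + r)]
    have hA : L * δ ≤ L ^ 2 - r ^ 2 := by
      nlinarith [mul_nonneg hδ0.le (by linarith : (0:ℝ) ≤ L - δ)]
    have t1 : L * δ * c ≤ (L ^ 2 - r ^ 2) * ∏ i, (r ^ 2 + a i ^ 2) :=
      mul_le_mul hA (hPc r) hc.le (by nlinarith)
    have t2 : -(ε * L) ≤ m * r := by
      nlinarith [mul_nonneg (by linarith : (0:ℝ) ≤ m + ε) h0,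
        mul_nonneg hε0.le (by linarith : (0:ℝ) ≤ L - r)]
    have t3 : 2 * L ^ 2 * (-(ε * L)) ≤ 2 * L ^ 2 * (m * r) :=
      mul_le_mul_of_nonneg_left t2 (by positivity)
    have t4 : L * (ε * (4 * L ^ 2)) ≤ L * (δ * c) :=
      mul_le_mul_of_nonneg_left hε2 hL.le
    have t5 : 0 < L * δ * c := mul_pos (mul_pos hL hδ0) hc
    linarith
  -- F is negative on [L + δ, ∞)
  have hright : ∀ r : ℝ, L + δ ≤ r → Fh N L a m r < 0 := by
    intro r h1
    rw [hFeq r]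
    have hr0 : 0 < r := by linarith
    have hneg : L ^ 2 - r ^ 2 ≤ -(2 * δ * L) := by
      nlinarith [mul_nonneg (by linarith : (0:ℝ) ≤ r - (L + δ))
        (by linarith : (0:ℝ) ≤ r + (L + δ)), sq_nonneg δ]
    have hneg' : L ^ 2 - r ^ 2 ≤ 0 := by nlinarith [mul_pos hδ0 hL]
    have t1 : (L ^ 2 - r ^ 2) * ∏ i, (r ^ 2 + a i ^ 2) ≤ (L ^ 2 - r ^ 2) * (c' * r ^ 2) :=
      mul_le_mul_of_nonpos_left (hPr r) hneg'
    have t2 : (L ^ 2 - r ^ 2) * (c' * r ^ 2) ≤ -(2 * δ * L) * (c' * r ^ 2) :=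
      mul_le_mul_of_nonneg_right hneg (mul_nonneg hc'.le (sq_nonneg r))
    have t3 : 2 * L ^ 2 * m * r ≤ 2 * L ^ 2 * ε * r := by
      nlinarith [mul_le_mul_of_nonneg_left
        (mul_nonneg (by linarith : (0:ℝ) ≤ ε - m) hr0.le)
        (by positivity : (0:ℝ) ≤ 2 * L ^ 2)]
    have hrr : L * r ≤ r ^ 2 := by
      nlinarith [mul_nonneg (by linarith : (0:ℝ) ≤ r - L) hr0.le]
    have t4 : 2 * δ * L * c' * (L * r) ≤ 2 * δ * L * c' * r ^ 2 :=
      mul_le_mul_of_nonneg_left hrr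
        (mul_nonneg (mul_nonneg (mul_nonneg (by norm_num) hδ0.le) hL.le) hc'.le)
    have t5 : (2 * ε) * (L ^ 2 * r) ≤ (δ * c') * (L ^ 2 * r) :=
      mul_le_mul_of_nonneg_right hε3 (mul_nonneg (sq_nonneg L) hr0.le)
    have t7 : 0 < δ * L ^ 2 * c' * r :=
      mul_pos (mul_pos (mul_pos hδ0 (by positivity)) hc') hr0
    nlinarith [t1, t2, t3, t4, t5, t7]
  -- derivative is negative on (L - δ, L + δ)
  have hderiv : ∀ x ∈ Set.Ioo (L - δ) (L + δ), deriv (Fh N L a m) x < 0 := by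
    intro x hx
    obtain ⟨hxl, hxr⟩ := hx
    have hx1 : L / 2 ≤ x := by linarith
    have hx2 : x ≤ 3 * L / 2 := by linarith
    have hx0 : 0 < x := by linarith
    rw [(Fh_hasDeriv N L a m x).deriv]
    have hS0 : 0 ≤ ∑ i, (∏ j ∈ Finset.univ.erase i, (x ^ 2 + a j ^ 2)) * (2 * x) :=
      Finset.sum_nonneg fun i _ =>
        mul_nonneg (Finset.prod_nonneg fun j _ => by positivity) (by linarith)
    have hSub : (∑ i, (∏ j ∈ Finset.univ.erase i, (x ^ 2 + a j ^ 2)) * (2 * x))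
        ≤ (N : ℝ) * (K * (3 * L)) := by
      have h := Finset.sum_le_card_nsmul Finset.univ
        (fun i => (∏ j ∈ Finset.univ.erase i, (x ^ 2 + a j ^ 2)) * (2 * x)) (K * (3 * L))
        (fun i _ => by
          have h1 := hKer i x hx0.le hx2
          have h2 : (0:ℝ) ≤ ∏ j ∈ Finset.univ.erase i, (x ^ 2 + a j ^ 2) :=
            Finset.prod_nonneg fun j _ => by positivity
          calc (∏ j ∈ Finset.univ.erase i, (x ^ 2 + a j ^ 2)) * (2 * x)
              ≤ K * (2 * x) := mul_le_mul_of_nonneg_right h1 (by linarith)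
            _ ≤ K * (3 * L) := mul_le_mul_of_nonneg_left (by linarith) hK0.le)
      simpa [nsmul_eq_mul, Finset.card_univ] using h
    have h3a : L ^ 2 - x ^ 2 ≤ 3 * L * δ := by
      nlinarith [mul_nonneg (by linarith : (0:ℝ) ≤ x - (L - δ))
        (by linarith : (0:ℝ) ≤ x + (L - δ)),
        mul_nonneg hδ0.le (by linarith : (0:ℝ) ≤ L + δ)]
    have t1 : (L ^ 2 - x ^ 2) * (∑ i, (∏ j ∈ Finset.univ.erase i, (x ^ 2 + a j ^ 2)) * (2 * x))
        ≤ (3 * L * δ) * ((N : ℝ) * (K * (3 * L))) := by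
      have ha1 : (L ^ 2 - x ^ 2) * (∑ i, (∏ j ∈ Finset.univ.erase i, (x ^ 2 + a j ^ 2)) * (2 * x))
          ≤ (3 * L * δ) * (∑ i, (∏ j ∈ Finset.univ.erase i, (x ^ 2 + a j ^ 2)) * (2 * x)) :=
        mul_le_mul_of_nonneg_right h3a hS0
      have ha2 : (3 * L * δ) * (∑ i, (∏ j ∈ Finset.univ.erase i, (x ^ 2 + a j ^ 2)) * (2 * x))
          ≤ (3 * L * δ) * ((N : ℝ) * (K * (3 * L))) :=
        mul_le_mul_of_nonneg_left hSub
          (mul_nonneg (mul_nonneg (by norm_num) hL.le) hδ0.le)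
      linarith
    have t0 : L * c ≤ 2 * x * ∏ i, (x ^ 2 + a i ^ 2) := by
      nlinarith [mul_nonneg (by linarith : (0:ℝ) ≤ 2 * x - L) (hP0 x).le,
        mul_le_mul_of_nonneg_left (hPc x) hL.le]
    have t2 : (L / 4) * (δ * (36 * L * N * K)) ≤ (L / 4) * c :=
      mul_le_mul_of_nonneg_left hδK (by positivity)
    have t3 : 2 * L ^ 2 * m ≤ 2 * L ^ 2 * ε :=
      mul_le_mul_of_nonneg_left hm1 (by positivity)
    have t4 : (L / 4) * (ε * (8 * L)) ≤ (L / 4) * c :=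
      mul_le_mul_of_nonneg_left hε1 (by positivity)
    have t5 : 0 < L * c := mul_pos hL hc
    nlinarith [t0, t1, t2, t3, t4, t5]
  have hIcc : L - δ ≤ L + δ := by linarith
  have hanti : StrictAntiOn (Fh N L a m) (Set.Icc (L - δ) (L + δ)) := by
    refine strictAntiOn_of_deriv_neg (convex_Icc _ _)
      ((Fh_cont N L a m).continuousOn) ?_
    rw [interior_Icc]; exact hderiv
  have hFl : 0 < Fh N L a m (L - δ) := hleft (L - δ) (by linarith) le_rfl
  have hFr : Fh N L a m (L + δ) < 0 := hright (L + δ) le_rfl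
  have hIVT := intermediate_value_Icc' hIcc (Fh_cont N L a m).continuousOn
  have h0mem : (0:ℝ) ∈ Set.Icc (Fh N L a m (L + δ)) (Fh N L a m (L - δ)) :=
    ⟨hFr.le, hFl.le⟩
  obtain ⟨u, huI, hu0⟩ := hIVT h0mem
  have hupos : 0 < u := lt_of_lt_of_le (by linarith : (0:ℝ) < L - δ) huI.1
  refine ⟨u, ⟨hupos, hu0⟩, ?_⟩
  rintro r ⟨hr0, hrF⟩
  have hrI : r ∈ Set.Icc (L - δ) (L + δ) := by
    constructor
    · by_contra h
      push_neg at h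
      exact absurd hrF (ne_of_gt (hleft r hr0.le (by linarith)))
    · by_contra h
      push_neg at h
      exact absurd hrF (ne_of_lt (hright r h.le))
  exact hanti.injOn hrI huI (hrF.trans hu0.symm)

/-- With `ℓ > 0` and all `aᵢ ≠ 0`, there exists `ε > 0` such that for
every real `m` with `|m| < ε` the polynomial
`F_m(r) = (ℓ² - r²) ∏ᵢ (r² + aᵢ²) + 2 ℓ² m r` has exactly two distinct real roots. -/
theorem horizon_function_two_roots_small_mass
    (N : ℕ) (hN : 1 ≤ N) (L : ℝ) (hL : 0 < L) (a : Fin N → ℝ) (ha : ∀ i, a i ≠ 0) :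
    ∃ ε : ℝ, 0 < ε ∧ ∀ m : ℝ, |m| < ε →
      {r : ℝ | (L ^ 2 - r ^ 2) * (∏ i, (r ^ 2 + a i ^ 2)) + 2 * L ^ 2 * m * r = 0}.encard
        = 2 := by
  obtain ⟨ε, hε0, hε⟩ := Fh_unique_pos_root N hN L hL a ha
  refine ⟨ε, hε0, fun m hm => ?_⟩
  obtain ⟨u, ⟨hu0, huF⟩, huniq⟩ := hε m hm
  have hm' : |(-m)| < ε := by rwa [abs_neg]
  obtain ⟨v, ⟨hv0, hvF⟩, hvniq⟩ := hε (-m) hm'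
  have hzero : Fh N L a m 0 ≠ 0 := by
    have h1 : Fh N L a m 0 = L ^ 2 * ∏ i, (a i) ^ 2 := by
      simp [Fh]
    rw [h1]
    have h2 : (0:ℝ) < L ^ 2 * ∏ i, (a i) ^ 2 :=
      mul_pos (by positivity) (Finset.prod_pos fun i _ =>
        lt_of_le_of_ne (sq_nonneg _) (Ne.symm (pow_ne_zero 2 (ha i))))
    exact h2.ne'
  have hset : {r : ℝ | (L ^ 2 - r ^ 2) * (∏ i, (r ^ 2 + a i ^ 2)) + 2 * L ^ 2 * m * r = 0}
      = {u, -v} := by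
    ext r
    simp only [Set.mem_setOf_eq, Set.mem_insert_iff, Set.mem_singleton_iff]
    constructor
    · intro hr
      have hr' : Fh N L a m r = 0 := hr
      rcases lt_trichotomy r 0 with h | h | h
      · right
        have hneg : Fh N L a (-m) (-r) = 0 := by rw [Fh_symm]; exact hr'
        have hv : -r = v := hvniq (-r) ⟨by linarith, hneg⟩
        linarith
      · exact absurd (h ▸ hr') hzero
      · left; exact huniq r ⟨h, hr'⟩
    · rintro (rfl | rfl)
      · exact huF
      · show Fh N L a m (-v) = 0
        rw [← Fh_symm]
        simpa using hvF
  rw [hset]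
  exact Set.encard_pair (by intro h; rw [h] at hu0; linarith)
end

section
/- Let N ≥ 1 be an integer, let a_1, …, a_N be nonzero real numbers, and let m be a real number satisfying 2|m| < ∏_{i=1}^N |a_i|^{(2N−1)/N}. Then for every real r one has ∏_{i=1}^N (r² + a_i²) > 2|m|·|r|. -/
/-- If all `aᵢ ≠ 0` and `2|m| < ∏ᵢ |aᵢ|^{(2N-1)/N}`, then for every real
`r` one has `∏ᵢ (r² + aᵢ²) > 2 |m| |r|`. -/
theorem product_dominates_mass_term
    (N : ℕ) (hN : 1 ≤ N) (a : Fin N → ℝ) (ha : ∀ i, a i ≠ 0) (m : ℝ)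
    (hm : 2 * |m| < ∏ i, |a i| ^ ((2 * (N : ℝ) - 1) / (N : ℝ))) :
    ∀ r : ℝ, 2 * |m| * |r| < ∏ i, (r ^ 2 + a i ^ 2) := by
  intro r
  have hN1 : (1 : ℝ) ≤ N := by exact_mod_cast hN
  have hNpos : (0 : ℝ) < N := by linarith
  set e : ℝ := (2 * (N : ℝ) - 1) / (N : ℝ) with he
  set P : ℝ := ∏ i, |a i| ^ e with hP
  have hPpos : 0 < P := by
    apply Finset.prod_pos
    intro i _
    exact Real.rpow_pos_of_pos (abs_pos.mpr (ha i)) _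
  rcases eq_or_ne r 0 with hr | hr
  · have : (0:ℝ) < ∏ i, (r ^ 2 + a i ^ 2) := by
      apply Finset.prod_pos
      intro i _
      have := pow_pos (abs_pos.mpr (ha i)) 2
      nlinarith [sq_nonneg r, sq_abs (a i)]
    simpa [hr] using this
  · have hrpos : 0 < |r| := abs_pos.mpr hr
    -- key pointwise bound
    have key : ∀ i : Fin N, |r| ^ ((1:ℝ) / N) * |a i| ^ e ≤ r ^ 2 + a i ^ 2 := by
      intro i
      have hw₁ : (0:ℝ) ≤ 1 / (2 * N) := by positivity
      have hw₂ : (0:ℝ) ≤ (2 * (N:ℝ) - 1) / (2 * N) := by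
        apply div_nonneg _ (by positivity)
        linarith
      have hsum : 1 / (2 * (N:ℝ)) + (2 * (N:ℝ) - 1) / (2 * N) = 1 := by
        field_simp
        ring
      have hgm := Real.geom_mean_le_arith_mean2_weighted hw₁ hw₂ (sq_nonneg r)
        (sq_nonneg (a i)) hsum
      have h1 : (r ^ 2 : ℝ) ^ ((1:ℝ) / (2 * N)) = |r| ^ ((1:ℝ) / N) := by
        rw [← sq_abs r, ← Real.rpow_natCast |r| 2, ← Real.rpow_mul (abs_nonneg r)]
        congr 1
        push_cast
        field_simp
      have h2 : ((a i) ^ 2 : ℝ) ^ ((2 * (N:ℝ) - 1) / (2 * N)) = |a i| ^ e := by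
        rw [← sq_abs (a i), ← Real.rpow_natCast |a i| 2,
          ← Real.rpow_mul (abs_nonneg (a i))]
        congr 1
        push_cast
        rw [he]
        field_simp
      calc |r| ^ ((1:ℝ) / N) * |a i| ^ e
          = (r ^ 2 : ℝ) ^ ((1:ℝ) / (2 * N)) * ((a i) ^ 2 : ℝ) ^ ((2 * (N:ℝ) - 1) / (2 * N)) := by
            rw [h1, h2]
        _ ≤ 1 / (2 * N) * r ^ 2 + (2 * (N:ℝ) - 1) / (2 * N) * (a i) ^ 2 := hgm
        _ ≤ r ^ 2 + a i ^ 2 := by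
            have h1le : 1 / (2 * (N:ℝ)) ≤ 1 := by
              rw [div_le_one (by positivity)]; linarith
            have h2le : (2 * (N:ℝ) - 1) / (2 * N) ≤ 1 := by
              rw [div_le_one (by positivity)]; linarith
            nlinarith [sq_nonneg r, sq_nonneg (a i)]
    have hprod : |r| * P ≤ ∏ i, (r ^ 2 + a i ^ 2) := by
      have := Finset.prod_le_prod (f := fun i : Fin N => |r| ^ ((1:ℝ) / N) * |a i| ^ e)
        (g := fun i => r ^ 2 + a i ^ 2) (s := Finset.univ)
        (fun i _ => by positivity) (fun i _ => key i)
      calc |r| * P = ∏ i : Fin N, |r| ^ ((1:ℝ) / N) * |a i| ^ e := by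
            rw [Finset.prod_mul_distrib, Finset.prod_const, hP]
            congr 1
            rw [Finset.card_univ, Fintype.card_fin, ← Real.rpow_natCast (|r| ^ ((1:ℝ)/N)) N,
              ← Real.rpow_mul (abs_nonneg r)]
            rw [one_div, inv_mul_cancel₀ (ne_of_gt hNpos), Real.rpow_one]
        _ ≤ _ := this
    calc 2 * |m| * |r| < P * |r| := by
          exact mul_lt_mul_of_pos_right hm hrpos
      _ = |r| * P := mul_comm _ _
      _ ≤ _ := hprod
end

section
/- Let N ≥ 1 be an integer, ℓ > 0, a_1, …, a_N nonzero reals, m and r reals, μ ∈ ℝ^N. Set Ξ_i = 1 + a_i²/ℓ², W = 1 + Σ_{i=1}^N a_i² μ_i²/(ℓ² Ξ_i), U = (1 + Σ_{k=1}^N a_k² μ_k²/(r² + a_k²))·∏_{k=1}^N (r² + a_k²), and V = (r²/ℓ² − 1)·∏_{k=1}^N (r² + a_k²). Let ĝ be the (N+1) × (N+1) symmetric real matrix with entries ĝ_{00} = W(1 − r²/ℓ²) + (2mr/U)·W², ĝ_{0i} = ĝ_{i0} = (2mr/U)·W·a_i μ_i²/Ξ_i for 1 ≤ i ≤ N, and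 ĝ_{ij} = ((r² + a_i²) μ_i²/Ξ_i)·δ_{ij} + (2mr/U)·(a_i μ_i²/Ξ_i)·(a_j μ_j²/Ξ_j) for 1 ≤ i, j ≤ N. Then det ĝ = −W·(V − 2mr)·∏_{i=1}^N μ_i²/Ξ_i. -/
set_option maxHeartbeats 1000000 in
/-- Determinant of the `(N+1) × (N+1)` matrix `ĝ` of the
`(t, φ¹, …, φᴺ)`-sector of the metric (realized as a block matrix over `Fin 1 ⊕ Fin N`):
`det ĝ = -W (V - 2mr) ∏ᵢ μᵢ²/Ξᵢ`. -/
theorem tphi_sector_det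
    (N : ℕ) (hN : 1 ≤ N) (L : ℝ) (hL : 0 < L) (a : Fin N → ℝ) (ha : ∀ i, a i ≠ 0)
    (m r : ℝ) (μ : Fin N → ℝ) :
    let Ξ : Fin N → ℝ := fun i => 1 + a i ^ 2 / L ^ 2
    let W : ℝ := 1 + ∑ i, a i ^ 2 * μ i ^ 2 / (L ^ 2 * Ξ i)
    let U : ℝ :=
      (1 + ∑ k, a k ^ 2 * μ k ^ 2 / (r ^ 2 + a k ^ 2)) * ∏ k, (r ^ 2 + a k ^ 2)
    let V : ℝ := (r ^ 2 / L ^ 2 - 1) * ∏ k, (r ^ 2 + a k ^ 2)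
    (Matrix.fromBlocks
        (Matrix.of fun _ _ : Fin 1 => W * (1 - r ^ 2 / L ^ 2) + 2 * m * r / U * W ^ 2)
        (Matrix.of fun (_ : Fin 1) (j : Fin N) => 2 * m * r / U * W * (a j * μ j ^ 2 / Ξ j))
        (Matrix.of fun (i : Fin N) (_ : Fin 1) => 2 * m * r / U * W * (a i * μ i ^ 2 / Ξ i))
        (Matrix.of fun i j : Fin N =>
          (if i = j then (r ^ 2 + a i ^ 2) * μ i ^ 2 / Ξ i else 0) +
            2 * m * r / U * (a i * μ i ^ 2 / Ξ i) * (a j * μ j ^ 2 / Ξ j))).det =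
      -W * (V - 2 * m * r) * ∏ i, μ i ^ 2 / Ξ i := by
  intro Ξ W U V
  have hΞdef : ∀ i, Ξ i = 1 + a i ^ 2 / L ^ 2 := fun _ => rfl
  have hWdef : W = 1 + ∑ i, a i ^ 2 * μ i ^ 2 / (L ^ 2 * Ξ i) := rfl
  have hUdef : U =
      (1 + ∑ k, a k ^ 2 * μ k ^ 2 / (r ^ 2 + a k ^ 2)) * ∏ k, (r ^ 2 + a k ^ 2) := rfl
  have hVdef : V = (r ^ 2 / L ^ 2 - 1) * ∏ k, (r ^ 2 + a k ^ 2) := rfl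
  clear_value Ξ W U V
  have hLne : (L : ℝ) ≠ 0 := hL.ne'
  have hL2 : (L : ℝ) ^ 2 ≠ 0 := by positivity
  have hΞpos : ∀ i, 0 < Ξ i := fun i => by rw [hΞdef]; positivity
  have hΞ : ∀ i, Ξ i ≠ 0 := fun i => (hΞpos i).ne'
  have hR : ∀ i, (0:ℝ) < r ^ 2 + a i ^ 2 := fun i => by
    have := ha i; positivity
  have hRne : ∀ i, (r:ℝ) ^ 2 + a i ^ 2 ≠ 0 := fun i => (hR i).ne'
  have hW : (0:ℝ) < W := by
    have h1 : ∀ i ∈ Finset.univ, (0:ℝ) ≤ a i ^ 2 * μ i ^ 2 / (L ^ 2 * Ξ i) := fun i _ => by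
      have := hΞpos i; positivity
    have h2 := Finset.sum_nonneg h1
    rw [hWdef]; linarith
  have hWne : W ≠ 0 := hW.ne'
  have hW' : (0:ℝ) < 1 + ∑ k, a k ^ 2 * μ k ^ 2 / (r ^ 2 + a k ^ 2) := by
    have h1 : ∀ i ∈ Finset.univ, (0:ℝ) ≤ a i ^ 2 * μ i ^ 2 / (r ^ 2 + a i ^ 2) := fun i _ => by
      have := hR i; positivity
    have h2 := Finset.sum_nonneg h1
    linarith
  have hProdR : (0:ℝ) < ∏ k, (r ^ 2 + a k ^ 2) := Finset.prod_pos fun i _ => hR i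
  have hU : U ≠ 0 := by rw [hUdef]; exact mul_ne_zero hW'.ne' hProdR.ne'
  by_cases hμ : ∃ i, μ i = 0
  · obtain ⟨i0, hi0⟩ := hμ
    rw [Matrix.det_eq_zero_of_row_eq_zero (Sum.inr i0) ?_,
      show (∏ i, μ i ^ 2 / Ξ i) = 0 from
        Finset.prod_eq_zero (Finset.mem_univ i0) (by simp [hi0]), mul_zero]
    rintro (j | j) <;> simp [hi0]
  · push_neg at hμ
    set c : ℝ := 2 * m * r / U with hc
    clear_value c
    have hdne : ∀ i, (r ^ 2 + a i ^ 2) * μ i ^ 2 / Ξ i ≠ 0 := fun i =>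
      div_ne_zero (mul_ne_zero (hRne i) (pow_ne_zero _ (hμ i))) (hΞ i)
    rw [Matrix.det_eq_of_forall_row_eq_smul_add_const
      (B := Matrix.fromBlocks
        (Matrix.of fun _ _ : Fin 1 => W * (1 - r ^ 2 / L ^ 2) + c * W ^ 2)
        (Matrix.of fun (_ : Fin 1) (j : Fin N) => c * W * (a j * μ j ^ 2 / Ξ j))
        (Matrix.of fun (i : Fin N) (_ : Fin 1) =>
          -((1 - r ^ 2 / L ^ 2) * (a i * μ i ^ 2 / Ξ i)))
        (Matrix.diagonal fun i => (r ^ 2 + a i ^ 2) * μ i ^ 2 / Ξ i))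
      (Sum.elim (fun _ => 0) (fun i => (a i * μ i ^ 2 / Ξ i) / W)) (Sum.inl 0) rfl ?_]
    · -- compute det of the reduced matrix
      letI instd : Invertible (fun i => (r ^ 2 + a i ^ 2) * μ i ^ 2 / Ξ i : Fin N → ℝ) :=
        ⟨fun i => ((r ^ 2 + a i ^ 2) * μ i ^ 2 / Ξ i)⁻¹,
          funext fun i => inv_mul_cancel₀ (hdne i),
          funext fun i => mul_inv_cancel₀ (hdne i)⟩
      letI := Matrix.diagonalInvertible (fun i => (r ^ 2 + a i ^ 2) * μ i ^ 2 / Ξ i : Fin N → ℝ)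
      rw [Matrix.det_fromBlocks₂₂, Matrix.invOf_diagonal_eq, Matrix.det_diagonal,
        Matrix.det_fin_one]
      have hinv : (⅟(fun i => (r ^ 2 + a i ^ 2) * μ i ^ 2 / Ξ i : Fin N → ℝ)) =
          fun i => ((r ^ 2 + a i ^ 2) * μ i ^ 2 / Ξ i)⁻¹ := rfl
      rw [hinv]
      simp only [Matrix.sub_apply, Matrix.mul_apply, Matrix.of_apply]
      simp only [Matrix.diagonal_apply, mul_ite, mul_zero, ite_mul, zero_mul,
        Finset.sum_ite_eq, Finset.sum_ite_eq', Finset.mem_univ, if_true]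
      -- now pure algebra
      have hsum : ∀ j ∈ Finset.univ, c * W * (a j * μ j ^ 2 / Ξ j) *
            ((r ^ 2 + a j ^ 2) * μ j ^ 2 / Ξ j)⁻¹ *
            (-((1 - r ^ 2 / L ^ 2) * (a j * μ j ^ 2 / Ξ j))) =
          -(c * W * (1 - r ^ 2 / L ^ 2) *
            (a j ^ 2 * μ j ^ 2 / (Ξ j * (r ^ 2 + a j ^ 2)))) := fun j _ => by
        have h1 := hΞ j; have h2 := hRne j; have h3 := hμ j
        field_simp
      rw [Finset.sum_congr rfl hsum, Finset.sum_neg_distrib, ← Finset.mul_sum]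
      have hprod : (∏ i, (r ^ 2 + a i ^ 2) * μ i ^ 2 / Ξ i) =
          (∏ k, (r ^ 2 + a k ^ 2)) * ∏ i, μ i ^ 2 / Ξ i := by
        rw [← Finset.prod_mul_distrib]
        exact Finset.prod_congr rfl fun i _ => (mul_div_assoc _ _ _)
      rw [hprod]
      set S : ℝ := ∑ j, a j ^ 2 * μ j ^ 2 / (Ξ j * (r ^ 2 + a j ^ 2)) with hS
      set T : ℝ := ∑ k, a k ^ 2 * μ k ^ 2 / (r ^ 2 + a k ^ 2) with hT
      set P : ℝ := ∏ i, μ i ^ 2 / Ξ i with hP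
      set Q : ℝ := ∏ k, (r ^ 2 + a k ^ 2) with hQ
      have hWS : W + (1 - r ^ 2 / L ^ 2) * S = 1 + T := by
        rw [hWdef, hS, hT, Finset.mul_sum, add_assoc, ← Finset.sum_add_distrib]
        congr 1
        refine Finset.sum_congr rfl fun j _ => ?_
        rw [hΞdef j]
        have h2 := hRne j
        have h4 : (1:ℝ) + a j ^ 2 / L ^ 2 ≠ 0 := by positivity
        field_simp
        ring
      have hcU : c * ((1 + T) * Q) = 2 * m * r := by
        rw [hc, ← hUdef]
        field_simp
      rw [hVdef]
      linear_combination (c * W * Q * P) * hWS + (W * P) * hcU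
    · rintro (i | i) (j | j) <;>
        simp only [Matrix.fromBlocks_apply₁₁, Matrix.fromBlocks_apply₁₂,
          Matrix.fromBlocks_apply₂₁, Matrix.fromBlocks_apply₂₂, Matrix.of_apply,
          Sum.elim_inl, Sum.elim_inr, Matrix.diagonal_apply]
      · ring
      · ring
      · have h1 := hΞ i
        field_simp
        ring
      · have h1 := hΞ i; have h2 := hΞ j
        by_cases hij : i = j <;> simp only [hij, if_true, if_false] <;> field_simp <;> ring
end

section
/- Let N ≥ 1 be an integer, ℓ > 0, a_1, …, a_N nonzero reals, m and r reals, μ ∈ ℝ^N. Set Ξ_i = 1 + a_i²/ℓ², P = ∏_{i=1}^N (r² + a_i²), V = (r²/ℓ² − 1)·P, W = 1 + Σ_{i=1}^N a_i² μ_i²/(ℓ² Ξ_i), S₁ = Σ_{i=1}^N a_i² μ_i²/(r² + a_i²), and S₂ = Σ_{i=1}^N a_i² μ_i²/(Ξ_i (r² + a_i²)). Then (r² − ℓ²)·(P·(1 + S₁) + 2mr·S₂) = ℓ²·((V − 2mr)·(1 + S₁) + 2mr·W). -/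
/-- The rational identity underlying the stable-causality criterion:
`(r² - ℓ²) (P (1 + S₁) + 2mr S₂) = ℓ² ((V - 2mr)(1 + S₁) + 2mr W)`. -/
theorem causality_identity
    (N : ℕ) (hN : 1 ≤ N) (L : ℝ) (hL : 0 < L) (a : Fin N → ℝ) (ha : ∀ i, a i ≠ 0)
    (m r : ℝ) (μ : Fin N → ℝ) :
    let Ξ : Fin N → ℝ := fun i => 1 + a i ^ 2 / L ^ 2
    let P : ℝ := ∏ i, (r ^ 2 + a i ^ 2)
    let V : ℝ := (r ^ 2 / L ^ 2 - 1) * P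
    let W : ℝ := 1 + ∑ i, a i ^ 2 * μ i ^ 2 / (L ^ 2 * Ξ i)
    let S₁ : ℝ := ∑ i, a i ^ 2 * μ i ^ 2 / (r ^ 2 + a i ^ 2)
    let S₂ : ℝ := ∑ i, a i ^ 2 * μ i ^ 2 / (Ξ i * (r ^ 2 + a i ^ 2))
    (r ^ 2 - L ^ 2) * (P * (1 + S₁) + 2 * m * r * S₂) =
      L ^ 2 * ((V - 2 * m * r) * (1 + S₁) + 2 * m * r * W) := by
  intro Ξ P V W S₁ S₂
  have hL2 : (L : ℝ) ^ 2 ≠ 0 := by positivity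
  have key : (r ^ 2 - L ^ 2) * S₂ = L ^ 2 * ((W - 1) - S₁) := by
    show (r ^ 2 - L ^ 2) * (∑ i, a i ^ 2 * μ i ^ 2 / (Ξ i * (r ^ 2 + a i ^ 2)))
        = L ^ 2 * (((1 + ∑ i, a i ^ 2 * μ i ^ 2 / (L ^ 2 * Ξ i)) - 1)
            - ∑ i, a i ^ 2 * μ i ^ 2 / (r ^ 2 + a i ^ 2))
    rw [add_sub_cancel_left, ← Finset.sum_sub_distrib, Finset.mul_sum, Finset.mul_sum]
    refine Finset.sum_congr rfl fun i _ => ?_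
    have hai := ha i
    have hra : r ^ 2 + a i ^ 2 ≠ 0 := by positivity
    have hΞ : Ξ i ≠ 0 := by
      show (1 : ℝ) + a i ^ 2 / L ^ 2 ≠ 0; positivity
    show (r ^ 2 - L ^ 2) * (a i ^ 2 * μ i ^ 2 / ((1 + a i ^ 2 / L ^ 2) * (r ^ 2 + a i ^ 2)))
        = L ^ 2 * (a i ^ 2 * μ i ^ 2 / (L ^ 2 * (1 + a i ^ 2 / L ^ 2))
            - a i ^ 2 * μ i ^ 2 / (r ^ 2 + a i ^ 2))
    have hΞ' : (1 : ℝ) + a i ^ 2 / L ^ 2 ≠ 0 := hΞ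
    field_simp
    ring
  have hV : (r ^ 2 - L ^ 2) * P = L ^ 2 * V := by
    show (r ^ 2 - L ^ 2) * P = L ^ 2 * ((r ^ 2 / L ^ 2 - 1) * P)
    field_simp
  linear_combination (1 + S₁) * hV + 2 * m * r * key
end

section
/- Let N ≥ 1 be an integer, ℓ > 0, a_1, …, a_N nonzero reals, r a nonzero real, and n ∈ ℝ^N with n ≠ 0. Set Ξ_i = 1 + a_i²/ℓ² and D = Σ_{k=1}^N a_k² n_k²/Ξ_k (note D > 0). Then the N × N symmetric real matrix σ with entries σ_{ij} = ((r² + a_i²)/Ξ_i)·δ_{ij} − ((1 − r²/ℓ²)/D)·(a_i² n_i/Ξ_i)·(a_j² n_j/Ξ_j) is positive definite. -/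
/-- With `ℓ > 0`, all `aᵢ ≠ 0`, `r ≠ 0`, `n ≠ 0`, `Ξᵢ = 1 + aᵢ²/ℓ²` and
`D = ∑ₖ aₖ² nₖ²/Ξₖ`, the matrix
`σ_{ij} = ((r² + aᵢ²)/Ξᵢ) δ_{ij} - ((1 - r²/ℓ²)/D) (aᵢ² nᵢ/Ξᵢ)(aⱼ² nⱼ/Ξⱼ)`
is positive definite. -/
theorem boundary_metric_posDef
    (N : ℕ) (hN : 1 ≤ N) (L : ℝ) (hL : 0 < L) (a : Fin N → ℝ) (ha : ∀ i, a i ≠ 0)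
    (r : ℝ) (hr : r ≠ 0) (n : Fin N → ℝ) (hn : n ≠ 0) :
    let Ξ : Fin N → ℝ := fun i => 1 + a i ^ 2 / L ^ 2
    let D : ℝ := ∑ k, a k ^ 2 * n k ^ 2 / Ξ k
    (Matrix.of fun i j : Fin N =>
        (if i = j then (r ^ 2 + a i ^ 2) / Ξ i else 0) -
          (1 - r ^ 2 / L ^ 2) / D * (a i ^ 2 * n i / Ξ i) * (a j ^ 2 * n j / Ξ j)).PosDef := by
  intro Ξ D
  have hΞ : ∀ i, 0 < Ξ i := by
    intro i
    have := sq_nonneg (a i)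
    show 0 < 1 + a i ^ 2 / L ^ 2
    positivity
  obtain ⟨j0, hj0⟩ := Function.ne_iff.mp hn
  simp only [Pi.zero_apply] at hj0
  have hD : 0 < D := by
    apply Finset.sum_pos' (fun k _ => by have := hΞ k; positivity)
    refine ⟨j0, Finset.mem_univ _, ?_⟩
    have h1 := ha j0
    have h2 := hΞ j0
    positivity
  set e : ℝ := 1 - r ^ 2 / L ^ 2 with he
  set c : ℝ := e / D with hc
  set v : Fin N → ℝ := fun i => a i ^ 2 * n i / Ξ i with hv
  set w : Fin N → ℝ := fun i => (r ^ 2 + a i ^ 2) / Ξ i with hw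
  have hwpos : ∀ i, 0 < w i := by
    intro i
    have h1 := hΞ i
    have h2 := ha i
    have h3 : (0:ℝ) < r ^ 2 + a i ^ 2 := by positivity
    exact div_pos h3 h1
  rw [Matrix.posDef_iff_dotProduct_mulVec]
  constructor
  · ext i j
    simp only [Matrix.conjTranspose_apply, Matrix.of_apply, star_trivial]
    by_cases h : i = j
    · subst h; ring
    · simp only [if_neg h, if_neg (Ne.symm h)]; ring
  · intro x hx
    obtain ⟨i0, hi0⟩ := Function.ne_iff.mp hx
    simp only [Pi.zero_apply] at hi0
    have hW : 0 < ∑ i, w i * x i ^ 2 := by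
      apply Finset.sum_pos' (fun k _ => by have := (hwpos k).le; positivity)
      exact ⟨i0, Finset.mem_univ _, by have := hwpos i0; positivity⟩
    have hfinal : 0 < (∑ i, w i * x i ^ 2) - c * (∑ i, v i * x i) ^ 2 := by
      rcases le_or_gt c 0 with hcle | hcpos
      · have hS := sq_nonneg (∑ i, v i * x i)
        nlinarith
      · have hCS : (∑ i, v i * x i) ^ 2 ≤ (∑ i, v i ^ 2 / w i) * (∑ i, w i * x i ^ 2) := by
          have h := Finset.sum_mul_sq_le_sq_mul_sq Finset.univ
            (fun i => v i / Real.sqrt (w i)) (fun i => Real.sqrt (w i) * x i)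
          have e1 : ∀ i : Fin N, v i / Real.sqrt (w i) * (Real.sqrt (w i) * x i) = v i * x i := by
            intro i
            have hs : Real.sqrt (w i) ≠ 0 := by
              have := hwpos i; positivity
            field_simp
          have e2 : ∀ i : Fin N, (v i / Real.sqrt (w i)) ^ 2 = v i ^ 2 / w i := by
            intro i
            rw [div_pow, Real.sq_sqrt (hwpos i).le]
          have e3 : ∀ i : Fin N, (Real.sqrt (w i) * x i) ^ 2 = w i * x i ^ 2 := by
            intro i
            rw [mul_pow, Real.sq_sqrt (hwpos i).le]
          simpa only [e1, e2, e3] using h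
        have hepos : 0 < e := by
          by_contra h
          push_neg at h
          have : c ≤ 0 := div_nonpos_of_nonpos_of_nonneg h hD.le
          linarith
        have hkey : ∀ i, e * a i ^ 2 < r ^ 2 + a i ^ 2 := by
          intro i
          have h1 : 0 < r ^ 2 := by positivity
          have h2 : 0 ≤ a i ^ 2 * (r ^ 2 / L ^ 2) := by positivity
          rw [he]; nlinarith
        have hterm_eq : ∀ i, e * (v i ^ 2 / w i)
            = (e * a i ^ 2) * (a i ^ 2 * n i ^ 2 / (Ξ i * (r ^ 2 + a i ^ 2))) := by
          intro i
          have h1 : Ξ i ≠ 0 := (hΞ i).ne'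
          have h2 : (r ^ 2 + a i ^ 2) ≠ 0 := by have := ha i; positivity
          simp only [hv, hw]
          field_simp
        have hterm_eq2 : ∀ i, (r ^ 2 + a i ^ 2) * (a i ^ 2 * n i ^ 2 / (Ξ i * (r ^ 2 + a i ^ 2)))
            = a i ^ 2 * n i ^ 2 / Ξ i := by
          intro i
          have h1 : Ξ i ≠ 0 := (hΞ i).ne'
          have h2 : (r ^ 2 + a i ^ 2) ≠ 0 := by have := ha i; positivity
          field_simp
        have hT : e * (∑ i, v i ^ 2 / w i) < D := by
          rw [Finset.mul_sum]
          apply Finset.sum_lt_sum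
          · intro i _
            rw [hterm_eq i, ← hterm_eq2 i]
            apply mul_le_mul_of_nonneg_right (hkey i).le
            have h1 := (hΞ i).le
            have h2 : (0:ℝ) ≤ r ^ 2 + a i ^ 2 := by positivity
            positivity
          · refine ⟨j0, Finset.mem_univ _, ?_⟩
            rw [hterm_eq j0, ← hterm_eq2 j0]
            apply mul_lt_mul_of_pos_right (hkey j0)
            have h1 := hΞ j0
            have h2 : (0:ℝ) < r ^ 2 + a j0 ^ 2 := by have := ha j0; positivity
            have h3 := ha j0
            positivity
        have hcT : c * (∑ i, v i ^ 2 / w i) < 1 := by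
          rw [hc, div_mul_eq_mul_div, div_lt_one hD]
          exact hT
        have hTnn : 0 ≤ ∑ i, v i ^ 2 / w i :=
          Finset.sum_nonneg fun i _ => div_nonneg (sq_nonneg _) (hwpos i).le
        nlinarith [mul_le_mul_of_nonneg_left hCS hcpos.le]
    refine hfinal.trans_le (le_of_eq ?_)
    simp only [Matrix.mulVec, dotProduct, Matrix.of_apply, star_trivial]
    have inner : ∀ i, (∑ j, ((if i = j then (r ^ 2 + a i ^ 2) / Ξ i else 0) -
        c * (a i ^ 2 * n i / Ξ i) * (a j ^ 2 * n j / Ξ j)) * x j)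
        = w i * x i - c * v i * (∑ j, v j * x j) := by
      intro i
      have split : ∀ j, ((if i = j then (r ^ 2 + a i ^ 2) / Ξ i else 0) -
          c * (a i ^ 2 * n i / Ξ i) * (a j ^ 2 * n j / Ξ j)) * x j
          = (if i = j then w i * x i else 0) - c * v i * (v j * x j) := by
        intro j
        by_cases h : i = j
        · subst h; simp only [if_pos rfl, eq_self_iff_true, if_true, hw, hv]; ring
        · simp only [if_neg h, hv]; ring
      simp only [split]
      rw [Finset.sum_sub_distrib, ← Finset.mul_sum]
      simp
    calc (∑ i, w i * x i ^ 2) - c * (∑ i, v i * x i) ^ 2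
        = ∑ i, (w i * x i ^ 2 - c * (v i * x i) * (∑ j, v j * x j)) := by
          rw [Finset.sum_sub_distrib, ← Finset.sum_mul, ← Finset.mul_sum]
          ring
      _ = ∑ i, x i * ∑ j, ((if i = j then (r ^ 2 + a i ^ 2) / Ξ i else 0) -
          c * (a i ^ 2 * n i / Ξ i) * (a j ^ 2 * n j / Ξ j)) * x j := by
          apply Finset.sum_congr rfl
          intro i _
          rw [inner i]
          ring
end

section
/- Let N ≥ 1 be an integer, ℓ > 0, a_1, …, a_N real numbers, and r real, μ ∈ ℝ^N. Set Ξ_i = 1 + a_i²/ℓ², W = 1 + Σ_{i=1}^N a_i² μ_i²/(ℓ² Ξ_i), and y² := r²·(1 + Σ_{i=1}^N μ_i²) − Σ_{i=1}^N (r² + a_i²) μ_i²/Ξ_i. Then ℓ² − y² = W·(ℓ² − r²). -/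
/-- With `Ξᵢ = 1 + aᵢ²/ℓ²`, `W = 1 + ∑ᵢ aᵢ² μᵢ²/(ℓ² Ξᵢ)` and
`y² = r² (1 + ∑ᵢ μᵢ²) - ∑ᵢ (r² + aᵢ²) μᵢ²/Ξᵢ`, one has `ℓ² - y² = W (ℓ² - r²)`. -/
theorem kerr_schild_radial_identity
    (N : ℕ) (hN : 1 ≤ N) (L : ℝ) (hL : 0 < L) (a : Fin N → ℝ)
    (r : ℝ) (μ : Fin N → ℝ) :
    let Ξ : Fin N → ℝ := fun i => 1 + a i ^ 2 / L ^ 2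
    let W : ℝ := 1 + ∑ i, a i ^ 2 * μ i ^ 2 / (L ^ 2 * Ξ i)
    L ^ 2 - (r ^ 2 * (1 + ∑ i, μ i ^ 2) - ∑ i, (r ^ 2 + a i ^ 2) * μ i ^ 2 / Ξ i) =
      W * (L ^ 2 - r ^ 2) := by
  intro Ξ W
  have hΞ : ∀ i, Ξ i ≠ 0 := by
    intro i
    have : 0 < 1 + a i ^ 2 / L ^ 2 := by positivity
    simpa [Ξ] using this.ne'
  have key : ∀ i, (r ^ 2 + a i ^ 2) * μ i ^ 2 / Ξ i - r ^ 2 * μ i ^ 2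
      = a i ^ 2 * μ i ^ 2 / (L ^ 2 * Ξ i) * (L ^ 2 - r ^ 2) := by
    intro i
    have hL2 : (L : ℝ) ^ 2 ≠ 0 := by positivity
    field_simp [Ξ] at *
    have hΞL : Ξ i * L ^ 2 = L ^ 2 + a i ^ 2 := by
      show (1 + a i ^ 2 / L ^ 2) * L ^ 2 = L ^ 2 + a i ^ 2
      rw [add_mul, div_mul_cancel₀ _ hL2, one_mul]
    linear_combination (-(μ i ^ 2 * r ^ 2)) * hΞL
  have : ∑ i, ((r ^ 2 + a i ^ 2) * μ i ^ 2 / Ξ i - r ^ 2 * μ i ^ 2)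
      = ∑ i, a i ^ 2 * μ i ^ 2 / (L ^ 2 * Ξ i) * (L ^ 2 - r ^ 2) :=
    Finset.sum_congr rfl fun i _ => key i
  rw [Finset.sum_sub_distrib, ← Finset.sum_mul] at this
  have h2 : ∑ i, r ^ 2 * μ i ^ 2 = r ^ 2 * ∑ i, μ i ^ 2 := by
    rw [Finset.mul_sum]
  simp only [W]
  rw [h2] at this
  linarith [this]
end

section
/- Let N ≥ 1 be an integer, ℓ > 0, a_1, …, a_N nonzero reals, m and r reals, and μ ∈ ℝ^N with μ_i ≠ 0 for all i. Set Ξ_i = 1 + a_i²/ℓ², W = 1 + Σ_{i=1}^N a_i² μ_i²/(ℓ² Ξ_i), U = (1 + Σ_{k=1}^N a_k² μ_k²/(r² + a_k²))·∏_{k=1}^N (r² + a_k²), V = (r²/ℓ² − 1)·∏_{k=1}^N (r² + a_k²), and S₂ = Σ_{k=1}^N a_k² μ_k²/((r² + a_k²) Ξ_k). Assume 1 + (2mr/U)·S₂ ≠ 0, and let h be the invertible N × N matrix with entries h_{ij} = ((r² + a_i²) μ_i²/Ξ_i)·δ_{ij} + (2mr/U)·(a_i μ_i²/Ξ_i)·(a_j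 μ_j²/Ξ_j), and set v_i = (2mr/U)·W·a_i μ_i²/Ξ_i. Then the Schur complement satisfies: W(1 − r²/ℓ²) + (2mr/U)·W² − vᵀ h⁻¹ v = −(V − 2mr)·W / ((1 + (2mr/U)·S₂)·∏_{k=1}^N (r² + a_k²)). -/
open Finset

lemma sherman_right_inv {n : Type*} [Fintype n] [DecidableEq n]
    (d w : n → ℝ) (c : ℝ) (hd : ∀ i, d i ≠ 0)
    (hden : 1 + c * (∑ k, w k ^ 2 / d k) ≠ 0) :
    (Matrix.of fun i j => (if i = j then d i else 0) + c * w i * w j) *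
      (Matrix.of fun i j =>
        (if i = j then (d i)⁻¹ else 0) -
          c / (1 + c * (∑ k, w k ^ 2 / d k)) * (w i / d i) * (w j / d j)) = 1 := by
  set S : ℝ := ∑ k, w k ^ 2 / d k with hS
  ext i j
  rw [Matrix.mul_apply]
  simp only [Matrix.of_apply, Matrix.one_apply]
  have expand : ∀ k ∈ Finset.univ,
      ((if i = k then d i else 0) + c * w i * w k) *
        ((if k = j then (d k)⁻¹ else 0) - c / (1 + c * S) * (w k / d k) * (w j / d j)) =
      ((if i = k then (if k = j then d i * (d k)⁻¹ else 0) else 0)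
        - (if i = k then d i * (c / (1 + c * S) * (w k / d k) * (w j / d j)) else 0))
        + ((if k = j then c * w i * w k * (d k)⁻¹ else 0)
        - (c * w i * (c / (1 + c * S)) * (w j / d j)) * (w k ^ 2 / d k)) := by
    intro k _
    split_ifs <;> ring
  rw [Finset.sum_congr rfl expand, Finset.sum_add_distrib, Finset.sum_sub_distrib,
    Finset.sum_sub_distrib, Finset.sum_ite_eq, Finset.sum_ite_eq, Finset.sum_ite_eq',
    ← Finset.mul_sum, ← hS]
  simp only [Finset.mem_univ, if_true]
  by_cases hij : i = j
  · subst hij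
    simp only [if_pos rfl]
    field_simp [hd i, hden]
    ring
  · simp only [if_neg hij]
    field_simp [hd i, hd j, hden]
    ring

lemma sherman_dot {n : Type*} [Fintype n] [DecidableEq n]
    (d w : n → ℝ) (c t : ℝ) (hd : ∀ i, d i ≠ 0)
    (hden : 1 + c * (∑ k, w k ^ 2 / d k) ≠ 0) :
    dotProduct (fun i => t * w i)
      (Matrix.mulVec (Matrix.of fun i j => (if i = j then d i else 0) + c * w i * w j)⁻¹
        (fun i => t * w i)) =
      t ^ 2 * (∑ k, w k ^ 2 / d k) / (1 + c * (∑ k, w k ^ 2 / d k)) := by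
  set S : ℝ := ∑ k, w k ^ 2 / d k with hS
  rw [Matrix.inv_eq_right_inv (sherman_right_inv d w c hd hden)]
  have inner : ∀ i, (Matrix.mulVec (Matrix.of fun i j =>
      (if i = j then (d i)⁻¹ else 0) - c / (1 + c * S) * (w i / d i) * (w j / d j))
      (fun i => t * w i)) i = t * (w i / d i) * (1 - c / (1 + c * S) * S) := by
    intro i
    rw [Matrix.mulVec, dotProduct]
    simp only [Matrix.of_apply]
    have expand : ∀ j ∈ Finset.univ,
        ((if i = j then (d i)⁻¹ else 0) - c / (1 + c * S) * (w i / d i) * (w j / d j))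
          * (t * w j) =
        (if i = j then (d i)⁻¹ * (t * w j) else 0)
          - (c / (1 + c * S) * (w i / d i) * t) * (w j ^ 2 / d j) := by
      intro j _
      split_ifs <;> ring
    rw [Finset.sum_congr rfl expand, Finset.sum_sub_distrib, Finset.sum_ite_eq,
      ← Finset.mul_sum, ← hS]
    simp only [Finset.mem_univ, if_true]
    field_simp [hd i, hden]
  rw [dotProduct]
  have expand2 : ∀ i ∈ Finset.univ,
      (fun i => t * w i) i * (Matrix.mulVec (Matrix.of fun i j =>
        (if i = j then (d i)⁻¹ else 0) - c / (1 + c * S) * (w i / d i) * (w j / d j))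
        (fun i => t * w i)) i
      = (t ^ 2 * (1 - c / (1 + c * S) * S)) * (w i ^ 2 / d i) := by
    intro i _
    rw [inner i]
    field_simp [hd i, hden]
  rw [Finset.sum_congr rfl expand2, ← Finset.mul_sum, ← hS]
  field_simp [hden]
  ring

set_option maxHeartbeats 1000000 in
/-- The ADM lapse-squared (Schur complement) of the
`(t, φ¹, …, φᴺ)`-sector: with `h_{ij} = ((r² + aᵢ²) μᵢ²/Ξᵢ) δ_{ij} +
(2mr/U)(aᵢ μᵢ²/Ξᵢ)(aⱼ μⱼ²/Ξⱼ)` and `vᵢ = (2mr/U) W aᵢ μᵢ²/Ξᵢ`, assuming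
`1 + (2mr/U) S₂ ≠ 0`,
`W (1 - r²/ℓ²) + (2mr/U) W² - vᵀ h⁻¹ v
  = -(V - 2mr) W / ((1 + (2mr/U) S₂) ∏ₖ (r² + aₖ²))`. -/
theorem lapse_schur_complement
    (N : ℕ) (hN : 1 ≤ N) (L : ℝ) (hL : 0 < L) (a : Fin N → ℝ) (ha : ∀ i, a i ≠ 0)
    (m r : ℝ) (μ : Fin N → ℝ) (hμ : ∀ i, μ i ≠ 0) :
    let Ξ : Fin N → ℝ := fun i => 1 + a i ^ 2 / L ^ 2
    let W : ℝ := 1 + ∑ i, a i ^ 2 * μ i ^ 2 / (L ^ 2 * Ξ i)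
    let U : ℝ :=
      (1 + ∑ k, a k ^ 2 * μ k ^ 2 / (r ^ 2 + a k ^ 2)) * ∏ k, (r ^ 2 + a k ^ 2)
    let V : ℝ := (r ^ 2 / L ^ 2 - 1) * ∏ k, (r ^ 2 + a k ^ 2)
    let S₂ : ℝ := ∑ k, a k ^ 2 * μ k ^ 2 / ((r ^ 2 + a k ^ 2) * Ξ k)
    let h : Matrix (Fin N) (Fin N) ℝ := Matrix.of fun i j =>
      (if i = j then (r ^ 2 + a i ^ 2) * μ i ^ 2 / Ξ i else 0) +
        2 * m * r / U * (a i * μ i ^ 2 / Ξ i) * (a j * μ j ^ 2 / Ξ j)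
    let v : Fin N → ℝ := fun i => 2 * m * r / U * W * (a i * μ i ^ 2 / Ξ i)
    1 + 2 * m * r / U * S₂ ≠ 0 →
      W * (1 - r ^ 2 / L ^ 2) + 2 * m * r / U * W ^ 2 - dotProduct v (Matrix.mulVec h⁻¹ v) =
        -(V - 2 * m * r) * W /
          ((1 + 2 * m * r / U * S₂) * ∏ k, (r ^ 2 + a k ^ 2)) := by
  intro Ξ W U V S₂ h v hden
  have hXi : ∀ k, Ξ k = 1 + a k ^ 2 / L ^ 2 := fun k => rfl
  have hra : ∀ i, (0:ℝ) < r ^ 2 + a i ^ 2 := fun i => by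
    have := ha i; positivity
  have hΞpos : ∀ i, (0:ℝ) < Ξ i := fun i => by
    rw [hXi i]; positivity
  have hd : ∀ i, (r ^ 2 + a i ^ 2) * μ i ^ 2 / Ξ i ≠ 0 := fun i => by
    have h1 := hra i; have h2 := hΞpos i; have h3 := hμ i
    positivity
  have hS : (∑ k, (a k * μ k ^ 2 / Ξ k) ^ 2 / ((r ^ 2 + a k ^ 2) * μ k ^ 2 / Ξ k)) = S₂ := by
    refine Finset.sum_congr rfl fun k _ => ?_
    have h1 := (hra k).ne'
    have h2 := (hΞpos k).ne'
    have h3 := hμ k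
    field_simp
  have hden' : 1 + 2 * m * r / U *
      (∑ k, (a k * μ k ^ 2 / Ξ k) ^ 2 / ((r ^ 2 + a k ^ 2) * μ k ^ 2 / Ξ k)) ≠ 0 := by
    rw [hS]; exact hden
  have hdot : dotProduct v (Matrix.mulVec h⁻¹ v) =
      (2 * m * r / U * W) ^ 2 * S₂ / (1 + 2 * m * r / U * S₂) := by
    have := sherman_dot (fun i => (r ^ 2 + a i ^ 2) * μ i ^ 2 / Ξ i)
      (fun i => a i * μ i ^ 2 / Ξ i) (2 * m * r / U) (2 * m * r / U * W) hd hden'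
    rw [hS] at this
    exact this
  rw [hdot]
  -- key identity: U = (W + (1 - r²/L²) S₂) * P
  have hterm : ∀ k ∈ Finset.univ, a k ^ 2 * μ k ^ 2 / (r ^ 2 + a k ^ 2) =
      a k ^ 2 * μ k ^ 2 / (L ^ 2 * Ξ k) +
        (1 - r ^ 2 / L ^ 2) * (a k ^ 2 * μ k ^ 2 / ((r ^ 2 + a k ^ 2) * Ξ k)) := by
    intro k _
    rw [hXi k]
    have h1 := (hra k).ne'
    have h2 := hL.ne'
    field_simp
    ring
  have hsum : 1 + ∑ k, a k ^ 2 * μ k ^ 2 / (r ^ 2 + a k ^ 2) =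
      W + (1 - r ^ 2 / L ^ 2) * S₂ := by
    show _ = (1 + ∑ i, a i ^ 2 * μ i ^ 2 / (L ^ 2 * Ξ i)) +
      (1 - r ^ 2 / L ^ 2) * ∑ k, a k ^ 2 * μ k ^ 2 / ((r ^ 2 + a k ^ 2) * Ξ k)
    rw [Finset.sum_congr rfl hterm, Finset.sum_add_distrib, Finset.mul_sum]
    ring
  have hUeq : U = (W + (1 - r ^ 2 / L ^ 2) * S₂) * ∏ k, (r ^ 2 + a k ^ 2) := by
    show (1 + ∑ k, a k ^ 2 * μ k ^ 2 / (r ^ 2 + a k ^ 2)) * ∏ k, (r ^ 2 + a k ^ 2) = _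
    rw [hsum]
  have hVeq : V = (r ^ 2 / L ^ 2 - 1) * ∏ k, (r ^ 2 + a k ^ 2) := rfl
  have hPpos : (0:ℝ) < ∏ k, (r ^ 2 + a k ^ 2) := Finset.prod_pos fun k _ => hra k
  have hKpos : (0:ℝ) < W + (1 - r ^ 2 / L ^ 2) * S₂ := by
    rw [← hsum]
    have : (0:ℝ) ≤ ∑ k, a k ^ 2 * μ k ^ 2 / (r ^ 2 + a k ^ 2) :=
      Finset.sum_nonneg fun k _ => by have := (hra k).le; positivity
    linarith
  have hUpos : (0:ℝ) < U := by
    rw [hUeq]; exact mul_pos hKpos hPpos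
  have hquot : 1 + 2 * m * r / U * S₂ = (U + 2 * m * r * S₂) / U := by
    field_simp
  have hden2 : U + 2 * m * r * S₂ ≠ 0 := fun hc => hden (by rw [hquot, hc, zero_div])
  clear_value v h S₂ V U W Ξ
  rw [hUeq] at hden2
  rw [hquot, hVeq, hUeq]
  have hKne := hKpos.ne'
  have hPne := hPpos.ne'
  clear hquot hUeq hVeq hsum hdot hden' hden hS hterm hKpos hUpos
  generalize hx : r ^ 2 / L ^ 2 = x at hden2 hKne ⊢
  field_simp
  ring
end

section
/- Let N ≥ 1 be an integer, ℓ > 0, a_1, …, a_N nonzero reals, and μ ∈ ℝ^N fixed. For r real with all r² + a_i² > 0 let γ̃(r) be the N × N matrix with entries γ̃_{ij}(r) = ((r² + a_i²)/Ξ_i)·δ_{ij} − (r²/(1 + Σ_{k=1}^N μ_k²))·μ_i μ_j − ((ℓ² − r²)/(4W))·(2 a_i² μ_i/(ℓ² Ξ_i))·(2 a_j² μ_j/(ℓ² Ξ_j)), where Ξ_i = 1 + a_i²/ℓ² and W = 1 + Σ_{i=1}^N a_i² μ_i²/(ℓ² Ξ_i). Then lim_{r → ∞} r^{−2N}·det γ̃(r)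 = ((1 + Σ_{i=1}^N a_i² μ_i²/(ℓ² Ξ_i))·(1 + Σ_{i=1}^N μ_i²)·∏_{i=1}^N Ξ_i)^{−1}; in particular this limit is strictly positive. -/
open Filter Matrix
set_option maxHeartbeats 2000000

/-- Asymptotics of the determinant of the `μ`-sector matrix `γ̃(r)`:
`lim_{r → ∞} r^{-2N} det γ̃(r)
  = ((1 + ∑ᵢ aᵢ² μᵢ²/(ℓ² Ξᵢ)) (1 + ∑ᵢ μᵢ²) ∏ᵢ Ξᵢ)⁻¹ > 0`. -/
theorem mu_sector_det_asymptotics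
    (N : ℕ) (hN : 1 ≤ N) (L : ℝ) (hL : 0 < L) (a : Fin N → ℝ) (ha : ∀ i, a i ≠ 0)
    (μ : Fin N → ℝ) :
    let Ξ : Fin N → ℝ := fun i => 1 + a i ^ 2 / L ^ 2
    let W : ℝ := 1 + ∑ i, a i ^ 2 * μ i ^ 2 / (L ^ 2 * Ξ i)
    let γ : ℝ → Matrix (Fin N) (Fin N) ℝ := fun r => Matrix.of fun i j =>
      (if i = j then (r ^ 2 + a i ^ 2) / Ξ i else 0) -
        r ^ 2 / (1 + ∑ k, μ k ^ 2) * (μ i * μ j) -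
        (L ^ 2 - r ^ 2) / (4 * W) * (2 * a i ^ 2 * μ i / (L ^ 2 * Ξ i)) *
          (2 * a j ^ 2 * μ j / (L ^ 2 * Ξ j))
    let c : ℝ :=
      ((1 + ∑ i, a i ^ 2 * μ i ^ 2 / (L ^ 2 * Ξ i)) * (1 + ∑ i, μ i ^ 2) * ∏ i, Ξ i)⁻¹
    Filter.Tendsto (fun r : ℝ => (γ r).det / r ^ (2 * N)) Filter.atTop (nhds c) ∧
      0 < c := by
  intro Ξ W γ c
  have hΞe : Ξ = fun i => 1 + a i ^ 2 / L ^ 2 := rfl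
  have hWdef : W = 1 + ∑ i, a i ^ 2 * μ i ^ 2 / (L ^ 2 * Ξ i) := rfl
  have hγe : γ = fun r => Matrix.of fun i j =>
      (if i = j then (r ^ 2 + a i ^ 2) / Ξ i else 0) -
        r ^ 2 / (1 + ∑ k, μ k ^ 2) * (μ i * μ j) -
        (L ^ 2 - r ^ 2) / (4 * W) * (2 * a i ^ 2 * μ i / (L ^ 2 * Ξ i)) *
          (2 * a j ^ 2 * μ j / (L ^ 2 * Ξ j)) := rfl
  have hce : c = ((1 + ∑ i, a i ^ 2 * μ i ^ 2 / (L ^ 2 * Ξ i)) * (1 + ∑ i, μ i ^ 2)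
      * ∏ i, Ξ i)⁻¹ := rfl
  clear_value Ξ W γ c
  have hL2 : (L : ℝ) ^ 2 ≠ 0 := by positivity
  have hΞpos : ∀ i, 0 < Ξ i := by
    intro i; rw [hΞe]; positivity
  have hΞ0 : ∀ i, Ξ i ≠ 0 := fun i => (hΞpos i).ne'
  have hSpos : 0 < 1 + ∑ k, μ k ^ 2 := by positivity
  have hS0 : (1 : ℝ) + ∑ k, μ k ^ 2 ≠ 0 := hSpos.ne'
  have hTpos : 0 < 1 + ∑ i, a i ^ 2 * μ i ^ 2 / (L ^ 2 * Ξ i) := by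
    have : 0 ≤ ∑ i, a i ^ 2 * μ i ^ 2 / (L ^ 2 * Ξ i) :=
      Finset.sum_nonneg fun i _ => by
        have := hΞpos i
        positivity
    linarith
  have hT0 : (1 : ℝ) + ∑ i, a i ^ 2 * μ i ^ 2 / (L ^ 2 * Ξ i) ≠ 0 := hTpos.ne'
  have hWpos : 0 < W := hWdef ▸ hTpos
  have hW0 : W ≠ 0 := hWpos.ne'
  have hprodpos : 0 < ∏ i, Ξ i := Finset.prod_pos fun i _ => hΞpos i
  have hprod0 : (∏ i, Ξ i) ≠ 0 := hprodpos.ne'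
  -- rank-2 decomposition data
  set v : Fin N → ℝ := fun i => 2 * a i ^ 2 * μ i / (L ^ 2 * Ξ i) with hv
  set d : Fin N → ℝ := fun i => (Ξ i)⁻¹ with hd
  set U : Matrix (Fin N) (Fin 2) ℝ :=
    Matrix.of (fun i k => if k = 0 then μ i else v i) with hU
  set V : Matrix (Fin 2) (Fin N) ℝ :=
    Matrix.of (fun k j => if k = 0 then -(μ j / (1 + ∑ k, μ k ^ 2)) else v j / (4 * W))
      with hV
  set A : Matrix (Fin N) (Fin N) ℝ := Matrix.diagonal d + U * V with hA
  set B : Matrix (Fin N) (Fin N) ℝ := Matrix.of (fun i j =>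
    (if i = j then a i ^ 2 / Ξ i else 0) - L ^ 2 / (4 * W) * v i * v j) with hB
  -- γ r = r² • A + B
  have hγr : ∀ r : ℝ, γ r = r ^ 2 • A + B := by
    intro r
    ext i j
    simp only [hγe, hA, hB, hU, hV, hv, hd, hΞe, Matrix.add_apply, Matrix.smul_apply,
      Matrix.of_apply, Matrix.mul_apply, Matrix.diagonal_apply, Fin.sum_univ_two,
      smul_eq_mul, (by decide : ((0 : Fin 2) = 0) = True),
      (by decide : ((1 : Fin 2) = 0) = False), if_true, if_false]
    by_cases hij : i = j
    · subst hij
      simp only [if_true]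
      ring
    · simp only [hij, if_false]
      ring
  -- entries of the 2×2 matrix V * (diagonal Ξ * U)
  have hdiagU : ∀ (j : Fin N) (l : Fin 2),
      (Matrix.diagonal Ξ * U) j l = Ξ j * U j l := fun j l => Matrix.diagonal_mul Ξ U j l
  have hM00 : (V * (Matrix.diagonal Ξ * U)) 0 0
      = -((1 + ∑ k, μ k ^ 2)⁻¹ * ((∑ k, μ k ^ 2) + ∑ j, a j ^ 2 * μ j ^ 2 / L ^ 2)) := by
    rw [Matrix.mul_apply]
    have : ∀ j ∈ Finset.univ, V 0 j * (Matrix.diagonal Ξ * U) j 0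
        = -(1 + ∑ k, μ k ^ 2)⁻¹ * (μ j ^ 2 + a j ^ 2 * μ j ^ 2 / L ^ 2) := by
      intro j _
      rw [hdiagU]
      simp only [hV, hU, hv, hΞe, Matrix.of_apply,
        (by decide : ((0 : Fin 2) = 0) = True), if_true]
      ring
    rw [Finset.sum_congr rfl this, ← Finset.mul_sum, Finset.sum_add_distrib]
    ring
  have hM01 : (V * (Matrix.diagonal Ξ * U)) 0 1
      = -((1 + ∑ k, μ k ^ 2)⁻¹ * (2 * ∑ j, a j ^ 2 * μ j ^ 2 / L ^ 2)) := by
    rw [Matrix.mul_apply]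
    have : ∀ j ∈ Finset.univ, V 0 j * (Matrix.diagonal Ξ * U) j 1
        = -(1 + ∑ k, μ k ^ 2)⁻¹ * (2 * (a j ^ 2 * μ j ^ 2 / L ^ 2)) := by
      intro j _
      rw [hdiagU]
      simp only [hV, hU, hv, hΞe, Matrix.of_apply,
        (by decide : ((0 : Fin 2) = 0) = True), (by decide : ((1 : Fin 2) = 0) = False),
        if_true, if_false]
      have h' : (1 : ℝ) + a j ^ 2 / L ^ 2 ≠ 0 := by positivity
      field_simp
    rw [Finset.sum_congr rfl this, ← Finset.mul_sum, ← Finset.mul_sum]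
    ring
  have hM10 : (V * (Matrix.diagonal Ξ * U)) 1 0
      = (4 * W)⁻¹ * (2 * ∑ j, a j ^ 2 * μ j ^ 2 / L ^ 2) := by
    rw [Matrix.mul_apply]
    have : ∀ j ∈ Finset.univ, V 1 j * (Matrix.diagonal Ξ * U) j 0
        = (4 * W)⁻¹ * (2 * (a j ^ 2 * μ j ^ 2 / L ^ 2)) := by
      intro j _
      rw [hdiagU]
      simp only [hV, hU, hv, hΞe, Matrix.of_apply,
        (by decide : ((0 : Fin 2) = 0) = True), (by decide : ((1 : Fin 2) = 0) = False),
        if_true, if_false]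
      have h' : (1 : ℝ) + a j ^ 2 / L ^ 2 ≠ 0 := by positivity
      field_simp
    rw [Finset.sum_congr rfl this, ← Finset.mul_sum, ← Finset.mul_sum]
  have hM11 : (V * (Matrix.diagonal Ξ * U)) 1 1
      = (4 * W)⁻¹ * (4 * ((∑ j, a j ^ 2 * μ j ^ 2 / L ^ 2)
          - ∑ j, a j ^ 2 * μ j ^ 2 / (L ^ 2 * Ξ j))) := by
    rw [Matrix.mul_apply]
    have : ∀ j ∈ Finset.univ, V 1 j * (Matrix.diagonal Ξ * U) j 1
        = (4 * W)⁻¹ * (4 * (a j ^ 2 * μ j ^ 2 / L ^ 2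
            - a j ^ 2 * μ j ^ 2 / (L ^ 2 * Ξ j))) := by
      intro j _
      rw [hdiagU]
      simp only [hV, hU, hv, hΞe, Matrix.of_apply,
        (by decide : ((0 : Fin 2) = 0) = True), (by decide : ((1 : Fin 2) = 0) = False),
        if_true, if_false]
      have h' : (1 : ℝ) + a j ^ 2 / L ^ 2 ≠ 0 := by positivity
      field_simp
      ring
    rw [Finset.sum_congr rfl this, ← Finset.mul_sum, ← Finset.mul_sum,
      Finset.sum_sub_distrib]
  -- determinant of the 2×2 "capacitance" matrix
  have hdet2 : (1 + V * (Matrix.diagonal Ξ * U)).det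
      = ((1 + ∑ k, μ k ^ 2) * W)⁻¹ := by
    have e00 : ((1 + V * (Matrix.diagonal Ξ * U) : Matrix (Fin 2) (Fin 2) ℝ)) 0 0
        = 1 + (V * (Matrix.diagonal Ξ * U)) 0 0 := by
      rw [Matrix.add_apply, Matrix.one_apply_eq]
    have e11 : ((1 + V * (Matrix.diagonal Ξ * U) : Matrix (Fin 2) (Fin 2) ℝ)) 1 1
        = 1 + (V * (Matrix.diagonal Ξ * U)) 1 1 := by
      rw [Matrix.add_apply, Matrix.one_apply_eq]
    have e01 : ((1 + V * (Matrix.diagonal Ξ * U) : Matrix (Fin 2) (Fin 2) ℝ)) 0 1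
        = (V * (Matrix.diagonal Ξ * U)) 0 1 := by
      rw [Matrix.add_apply, Matrix.one_apply_ne (by decide : (0 : Fin 2) ≠ 1), zero_add]
    have e10 : ((1 + V * (Matrix.diagonal Ξ * U) : Matrix (Fin 2) (Fin 2) ℝ)) 1 0
        = (V * (Matrix.diagonal Ξ * U)) 1 0 := by
      rw [Matrix.add_apply, Matrix.one_apply_ne (by decide : (1 : Fin 2) ≠ 0), zero_add]
    rw [Matrix.det_fin_two, e00, e11, e01, e10, hM00, hM01, hM10, hM11, hWdef]
    field_simp
    ring
  -- determinant of A
  have hDE : Matrix.diagonal d * Matrix.diagonal Ξ = 1 := by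
    rw [Matrix.diagonal_mul_diagonal]
    have : (fun i => d i * Ξ i) = fun _ => (1 : ℝ) :=
      funext fun i => inv_mul_cancel₀ (hΞ0 i)
    rw [this, Matrix.diagonal_one]
  have hAfact : A = Matrix.diagonal d * (1 + Matrix.diagonal Ξ * U * V) := by
    rw [Matrix.mul_add, Matrix.mul_one, ← Matrix.mul_assoc, ← Matrix.mul_assoc, hDE,
      Matrix.one_mul, hA]
  have hdetA : A.det = c := by
    rw [hAfact, Matrix.det_mul, Matrix.det_diagonal, Matrix.det_one_add_mul_comm, hdet2,
      hd, hce, hWdef]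
    rw [Finset.prod_inv_distrib, ← mul_inv]
    congr 1
    ring
  have hcpos : 0 < c :=
    hce ▸ inv_pos.mpr (mul_pos (mul_pos hTpos hSpos) hprodpos)
  refine ⟨?_, hcpos⟩
  -- the limit
  have h0 : Tendsto (fun r : ℝ => (r ^ 2)⁻¹) atTop (nhds 0) :=
    (tendsto_pow_atTop (two_ne_zero)).inv_tendsto_atTop
  have hlim : Tendsto (fun r : ℝ => A + (r ^ 2)⁻¹ • B) atTop (nhds A) := by
    have := (tendsto_const_nhds (x := A) (f := atTop)).add (h0.smul_const B)
    simpa using this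
  have hdetlim : Tendsto (fun r : ℝ => (A + (r ^ 2)⁻¹ • B).det) atTop (nhds A.det) :=
    ((continuous_id.matrix_det).tendsto A).comp hlim
  rw [← hdetA]
  refine hdetlim.congr' ?_
  filter_upwards [eventually_ge_atTop (1 : ℝ)] with r hr
  have hr0 : r ≠ 0 := by intro h; rw [h] at hr; linarith
  have hr2 : r ^ 2 ≠ 0 := pow_ne_zero _ hr0
  have h1 : A + (r ^ 2)⁻¹ • B = (r ^ 2)⁻¹ • γ r := by
    rw [hγr, smul_add, smul_smul, inv_mul_cancel₀ hr2, one_smul]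
  rw [h1, Matrix.det_smul, Fintype.card_fin, inv_pow, ← pow_mul,
    div_eq_mul_inv, mul_comm]
end
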